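/- arXiv:2302.11452 — 14 statements merged into one kernel-verified Lean document; each statement's English description precedes it below -/
import Mathlib

section
/- Let A be a type and let γ, θ be setoids (equivalence relations) on A. Form the duplication A(γ) and the setoids θ₀, θ₁, γ₀, η₀, η₁ on A(γ). Then in the lattice Setoid (A(γ)): (1) if γ ≤ θ then θ₀ = θ₁; (2) θ₀ = η₀ ⊔ (θ₀ ⊓ θ₁) and θ₁ = η₁ ⊔ (θ₀ ⊓ θ₁); (3) γ₀ = η₀ ⊔ η₁. -/
/-! Common setup: the lattice `Setoid A` of equivalence relations on `A`,
the duplication `Dup β = {p : A × A // β p.1 p.2}`, the lifted setoids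
`lift0 β θ = θ₀`, `lift1 β θ = θ₁`, the projection kernels `ker0 β = η₀`,
`ker1 β = η₁`, and relational composition `rc`. -/

variable {A : Type*}

/-- The duplication `A(β)`. -/
def Dup (β : Setoid A) : Type _ := {p : A × A // β.r p.1 p.2}

/-- `θ₀`: relate two elements of `A(β)` iff `θ` relates their first coordinates. -/
def lift0 (β θ : Setoid A) : Setoid (Dup β) :=
  ⟨fun x y => θ.r x.1.1 y.1.1,
   ⟨fun _ => θ.refl' _, fun h => θ.symm' h, fun h h' => θ.trans' h h'⟩⟩

/-- `θ₁`: relate two elements of `A(β)` iff `θ` relates their second coordinates. -/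
def lift1 (β θ : Setoid A) : Setoid (Dup β) :=
  ⟨fun x y => θ.r x.1.2 y.1.2,
   ⟨fun _ => θ.refl' _, fun h => θ.symm' h, fun h h' => θ.trans' h h'⟩⟩

/-- `η₀`: kernel of the first projection. -/
def ker0 (β : Setoid A) : Setoid (Dup β) :=
  ⟨fun x y => x.1.1 = y.1.1, ⟨fun _ => rfl, Eq.symm, Eq.trans⟩⟩

/-- `η₁`: kernel of the second projection. -/
def ker1 (β : Setoid A) : Setoid (Dup β) :=
  ⟨fun x y => x.1.2 = y.1.2, ⟨fun _ => rfl, Eq.symm, Eq.trans⟩⟩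

/-- Relational composition. -/
def rc {B : Type*} (r s : B → B → Prop) : B → B → Prop :=
  fun a b => ∃ c, r a c ∧ s c b

/-- Lemma 3.2, doubling lemma. -/
theorem doubling_lemma (γ θ : Setoid A) :
    (γ ≤ θ → lift0 γ θ = lift1 γ θ) ∧
    lift0 γ θ = ker0 γ ⊔ (lift0 γ θ ⊓ lift1 γ θ) ∧
    lift1 γ θ = ker1 γ ⊔ (lift0 γ θ ⊓ lift1 γ θ) ∧
    lift0 γ γ = ker0 γ ⊔ ker1 γ := by
  have h0 : ∀ (x y : Dup γ), x.1.1 = y.1.1 → (lift0 γ θ).r x y := by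
    intro x y h; show θ.r x.1.1 y.1.1; rw [h]
  have h1 : ∀ (x y : Dup γ), x.1.2 = y.1.2 → (lift1 γ θ).r x y := by
    intro x y h; show θ.r x.1.2 y.1.2; rw [h]
  have hg0 : ∀ (x y : Dup γ), x.1.1 = y.1.1 → (lift0 γ γ).r x y := by
    intro x y h; show γ.r x.1.1 y.1.1; rw [h]
  refine ⟨fun h => ?_, ?_, ?_, ?_⟩
  · apply Setoid.ext; rintro ⟨⟨a, a'⟩, ha⟩ ⟨⟨b, b'⟩, hb⟩
    constructor
    · intro hab; exact θ.trans' (θ.symm' (h ha)) (θ.trans' hab (h hb))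
    · intro hab; exact θ.trans' (h ha) (θ.trans' hab (θ.symm' (h hb)))
  · apply le_antisymm
    · rintro ⟨⟨a, a'⟩, ha⟩ ⟨⟨b, b'⟩, hb⟩ hab
      rw [Setoid.sup_eq_eqvGen]
      show Relation.EqvGen _ _ _
      have s1 := Relation.EqvGen.rel (r := fun x y => (ker0 γ) x y ∨ (lift0 γ θ ⊓ lift1 γ θ) x y)
        ⟨(a, a'), ha⟩ ⟨(a, a), γ.refl' a⟩ (Or.inl rfl)
      have s2 := Relation.EqvGen.rel (r := fun x y => (ker0 γ) x y ∨ (lift0 γ θ ⊓ lift1 γ θ) x y)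
        ⟨(a, a), γ.refl' a⟩ ⟨(b, b), γ.refl' b⟩ (Or.inr ⟨hab, hab⟩)
      have s3 := Relation.EqvGen.rel (r := fun x y => (ker0 γ) x y ∨ (lift0 γ θ ⊓ lift1 γ θ) x y)
        ⟨(b, b), γ.refl' b⟩ ⟨(b, b'), hb⟩ (Or.inl rfl)
      exact s1.trans _ _ _ (s2.trans _ _ _ s3)
    · exact sup_le (Setoid.le_def.mpr fun {x y} h => h0 x y h) inf_le_left
  · apply le_antisymm
    · rintro ⟨⟨a, a'⟩, ha⟩ ⟨⟨b, b'⟩, hb⟩ hab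
      rw [Setoid.sup_eq_eqvGen]
      show Relation.EqvGen _ _ _
      have s1 := Relation.EqvGen.rel (r := fun x y => (ker1 γ) x y ∨ (lift0 γ θ ⊓ lift1 γ θ) x y)
        ⟨(a, a'), ha⟩ ⟨(a', a'), γ.refl' a'⟩ (Or.inl rfl)
      have s2 := Relation.EqvGen.rel (r := fun x y => (ker1 γ) x y ∨ (lift0 γ θ ⊓ lift1 γ θ) x y)
        ⟨(a', a'), γ.refl' a'⟩ ⟨(b', b'), γ.refl' b'⟩ (Or.inr ⟨hab, hab⟩)
      have s3 := Relation.EqvGen.rel (r := fun x y => (ker1 γ) x y ∨ (lift0 γ θ ⊓ lift1 γ θ) x y)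
        ⟨(b', b'), γ.refl' b'⟩ ⟨(b, b'), hb⟩ (Or.inl rfl)
      exact s1.trans _ _ _ (s2.trans _ _ _ s3)
    · exact sup_le (Setoid.le_def.mpr fun {x y} h => h1 x y h) inf_le_right
  · apply le_antisymm
    · rintro ⟨⟨a, a'⟩, ha⟩ ⟨⟨b, b'⟩, hb⟩ hab
      rw [Setoid.sup_eq_eqvGen]
      show Relation.EqvGen _ _ _
      have s1 := Relation.EqvGen.rel (r := fun x y => (ker0 γ) x y ∨ (ker1 γ) x y)
        ⟨(a, a'), ha⟩ ⟨(a, b), hab⟩ (Or.inl rfl)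
      have s2 := Relation.EqvGen.rel (r := fun x y => (ker0 γ) x y ∨ (ker1 γ) x y)
        ⟨(a, b), hab⟩ ⟨(b, b), γ.refl' b⟩ (Or.inr rfl)
      have s3 := Relation.EqvGen.rel (r := fun x y => (ker0 γ) x y ∨ (ker1 γ) x y)
        ⟨(b, b), γ.refl' b⟩ ⟨(b, b'), hb⟩ (Or.inl rfl)
      exact s1.trans _ _ _ (s2.trans _ _ _ s3)
    · refine sup_le (Setoid.le_def.mpr fun {x y} h => hg0 x y h)
        (Setoid.le_def.mpr fun {x y} (h : x.1.2 = y.1.2) => ?_)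
      exact γ.trans' x.2 (h ▸ γ.symm' y.2)
end

section
/- Let A be a type and let α, β, γ, δ be setoids on A forming a pentagon N5. Form the duplication A(β) over β. Then in Setoid (A(β)): α₀ ⊓ α₁ ≰ α₀ ⊓ γ₁, α₀ ⊓ α₁ ≰ γ₀ ⊓ α₁, and α₀ ⊓ α₁ ≰ γ₀ ⊓ γ₁. -/
/-! Common setup: the lattice `Setoid A` of equivalence relations on `A`,
the duplication `Dup β = {p : A × A // β p.1 p.2}`, the lifted setoids
`lift0 β θ = θ₀`, `lift1 β θ = θ₁`, the projection kernels `ker0 β = η₀`,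
`ker1 β = η₁`, and relational composition `rc`. -/

variable {A : Type*}

/-- `α, β, γ, δ` form a pentagon `N₅` in `Setoid A`. -/
def IsN5 (α β γ δ : Setoid A) : Prop :=
  ⊥ < γ ∧ γ < α ∧ α < δ ∧ α ⊓ β = ⊥ ∧ γ ⊔ β = δ ∧ α ⊔ β = δ ∧ β ≠ ⊥ ∧ β ≠ δ

/-- Lemma 3.3(2). -/
theorem lemma1_part2 (α β γ δ : Setoid A) (h : IsN5 α β γ δ) :
    ¬ (lift0 β α ⊓ lift1 β α ≤ lift0 β α ⊓ lift1 β γ) ∧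
    ¬ (lift0 β α ⊓ lift1 β α ≤ lift0 β γ ⊓ lift1 β α) ∧
    ¬ (lift0 β α ⊓ lift1 β α ≤ lift0 β γ ⊓ lift1 β γ) := by
  obtain ⟨-, hγα, -, -, -, -, -, -⟩ := h
  have hne := hγα.not_ge
  have hex : ∃ a b, α.r a b ∧ ¬ γ.r a b := by
    by_contra hc
    push_neg at hc
    exact hne fun {x y} hxy => hc x y hxy
  obtain ⟨a, b, hab, hnab⟩ := hex
  have hxy : (lift0 β α ⊓ lift1 β α).r ⟨(a, a), β.refl' a⟩ ⟨(b, b), β.refl' b⟩ :=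
    ⟨hab, hab⟩
  exact ⟨fun hle => hnab (hle hxy).2, fun hle => hnab (hle hxy).1,
    fun hle => hnab (hle hxy).1⟩
end

section
/- Let A be a type and let α, β, γ, δ be setoids on A forming a pentagon N5. Form the duplication A(β) over β. If α₀ ⊓ γ₁ and γ₀ ⊓ α₁ are comparable in Setoid (A(β)) (i.e. α₀ ⊓ γ₁ ≤ γ₀ ⊓ α₁ or γ₀ ⊓ α₁ ≤ α₀ ⊓ γ₁), then α₀ ⊓ γ₁ = γ₀ ⊓ α₁ = γ₀ ⊓ γ₁. -/
/-! Common setup: the lattice `Setoid A` of equivalence relations on `A`,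
the duplication `Dup β = {p : A × A // β p.1 p.2}`, the lifted setoids
`lift0 β θ = θ₀`, `lift1 β θ = θ₁`, the projection kernels `ker0 β = η₀`,
`ker1 β = η₁`, and relational composition `rc`. -/

variable {A : Type*}

/-- Lemma 3.3(3). -/
theorem lemma1_part3 (α β γ δ : Setoid A) (h : IsN5 α β γ δ)
    (hcomp : lift0 β α ⊓ lift1 β γ ≤ lift0 β γ ⊓ lift1 β α ∨
      lift0 β γ ⊓ lift1 β α ≤ lift0 β α ⊓ lift1 β γ) :
    lift0 β α ⊓ lift1 β γ = lift0 β γ ⊓ lift1 β α ∧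
    lift0 β γ ⊓ lift1 β α = lift0 β γ ⊓ lift1 β γ := by
  obtain ⟨-, hga', -, -, -, -, -, -⟩ := h
  have hga : ∀ {a b}, γ.r a b → α.r a b := fun hab => Setoid.le_def.mp hga'.le hab
  -- the coordinate swap on `Dup β`
  let sw : Dup β → Dup β := fun x => ⟨(x.1.2, x.1.1), β.symm' x.2⟩
  have F1 : ∀ x y : Dup β, α.r x.1.1 y.1.1 → γ.r x.1.2 y.1.2 →
      γ.r x.1.1 y.1.1 ∧ α.r x.1.2 y.1.2 := by
    intro x y h1 h2
    rcases hcomp with hc | hc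
    · exact hc (x := x) (y := y) ⟨h1, h2⟩
    · exact (hc (x := sw x) (y := sw y) ⟨h2, h1⟩).symm
  have F2 : ∀ x y : Dup β, γ.r x.1.1 y.1.1 → α.r x.1.2 y.1.2 →
      α.r x.1.1 y.1.1 ∧ γ.r x.1.2 y.1.2 := by
    intro x y h1 h2
    rcases hcomp with hc | hc
    · exact (hc (x := sw x) (y := sw y) ⟨h2, h1⟩).symm
    · exact hc (x := x) (y := y) ⟨h1, h2⟩
  constructor
  · apply le_antisymm <;> rw [Setoid.le_def] <;> intro x y hxy
    · exact F1 x y hxy.1 hxy.2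
    · exact ⟨hga hxy.1, (F2 x y hxy.1 hxy.2).2⟩
  · apply le_antisymm <;> rw [Setoid.le_def] <;> intro x y hxy
    · exact ⟨hxy.1, (F2 x y hxy.1 hxy.2).2⟩
    · exact ⟨hxy.1, hga hxy.2⟩
end

section
/- Let A be a type and let α, β, γ, δ be setoids on A forming a pentagon N5. Form the duplication A(β) over β. Then in Setoid (A(β)): γ₀ ⊔ (α₀ ⊓ α₁) = α₀ and γ₁ ⊔ (α₀ ⊓ α₁) = α₁. -/
/-! Common setup: the lattice `Setoid A` of equivalence relations on `A`,
the duplication `Dup β = {p : A × A // β p.1 p.2}`, the lifted setoids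
`lift0 β θ = θ₀`, `lift1 β θ = θ₁`, the projection kernels `ker0 β = η₀`,
`ker1 β = η₁`, and relational composition `rc`. -/

variable {A : Type*}

/-- Lemma 3.3(4). -/
theorem lemma1_part4 (α β γ δ : Setoid A) (h : IsN5 α β γ δ) :
    lift0 β γ ⊔ (lift0 β α ⊓ lift1 β α) = lift0 β α ∧
    lift1 β γ ⊔ (lift0 β α ⊓ lift1 β α) = lift1 β α := by
  obtain ⟨-, hga, -, -, -, -, -, -⟩ := h
  have hgle : γ ≤ α := le_of_lt hga
  constructor
  · apply le_antisymm
    · apply sup_le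
      · intro x y hxy
        exact hgle (show γ x.1.1 y.1.1 from hxy)
      · exact inf_le_left
    · intro x y hxy
      rw [Setoid.sup_eq_eqvGen]
      have h1 : Relation.EqvGen (fun a b => (lift0 β γ).r a b ∨ ((lift0 β α ⊓ lift1 β α) : Setoid (Dup β)).r a b) x ⟨(x.1.1, x.1.1), β.refl' _⟩ :=
        Relation.EqvGen.rel _ _ (Or.inl (γ.refl' _))
      have h2 : Relation.EqvGen (fun a b => (lift0 β γ).r a b ∨ ((lift0 β α ⊓ lift1 β α) : Setoid (Dup β)).r a b)
          ⟨(x.1.1, x.1.1), β.refl' _⟩ ⟨(y.1.1, y.1.1), β.refl' _⟩ :=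
        Relation.EqvGen.rel _ _ (Or.inr ⟨hxy, hxy⟩)
      have h3 : Relation.EqvGen (fun a b => (lift0 β γ).r a b ∨ ((lift0 β α ⊓ lift1 β α) : Setoid (Dup β)).r a b)
          ⟨(y.1.1, y.1.1), β.refl' _⟩ y :=
        Relation.EqvGen.rel _ _ (Or.inl (γ.refl' _))
      exact (h1.trans _ _ _ (h2.trans _ _ _ h3))
  · apply le_antisymm
    · apply sup_le
      · intro x y hxy
        exact hgle (show γ x.1.2 y.1.2 from hxy)
      · exact inf_le_right
    · intro x y hxy
      rw [Setoid.sup_eq_eqvGen]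
      have h1 : Relation.EqvGen (fun a b => (lift1 β γ).r a b ∨ ((lift0 β α ⊓ lift1 β α) : Setoid (Dup β)).r a b) x ⟨(x.1.2, x.1.2), β.refl' _⟩ :=
        Relation.EqvGen.rel _ _ (Or.inl (γ.refl' _))
      have h2 : Relation.EqvGen (fun a b => (lift1 β γ).r a b ∨ ((lift0 β α ⊓ lift1 β α) : Setoid (Dup β)).r a b)
          ⟨(x.1.2, x.1.2), β.refl' _⟩ ⟨(y.1.2, y.1.2), β.refl' _⟩ :=
        Relation.EqvGen.rel _ _ (Or.inr ⟨hxy, hxy⟩)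
      have h3 : Relation.EqvGen (fun a b => (lift1 β γ).r a b ∨ ((lift0 β α ⊓ lift1 β α) : Setoid (Dup β)).r a b)
          ⟨(y.1.2, y.1.2), β.refl' _⟩ y :=
        Relation.EqvGen.rel _ _ (Or.inl (γ.refl' _))
      exact (h1.trans _ _ _ (h2.trans _ _ _ h3))
end

section
/- Let A be a type and let α, β, γ, δ be setoids on A forming a pentagon N5. Form the duplication A(β) over β and assume that α₀ ⊓ γ₁ and γ₀ ⊓ α₁ are incomparable in Setoid (A(β)) (neither one is ≤ the other). Then (α₀ ⊓ γ₁) ⊔ (γ₀ ⊓ α₁) < α₀ ⊓ α₁. -/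
/-! Common setup: the lattice `Setoid A` of equivalence relations on `A`,
the duplication `Dup β = {p : A × A // β p.1 p.2}`, the lifted setoids
`lift0 β θ = θ₀`, `lift1 β θ = θ₁`, the projection kernels `ker0 β = η₀`,
`ker1 β = η₁`, and relational composition `rc`. -/

variable {A : Type*}

/-- Lemma 3.5. -/
theorem lemma2 (α β γ δ : Setoid A) (h : IsN5 α β γ δ)
    (hinc : ¬ (lift0 β α ⊓ lift1 β γ ≤ lift0 β γ ⊓ lift1 β α) ∧
      ¬ (lift0 β γ ⊓ lift1 β α ≤ lift0 β α ⊓ lift1 β γ)) :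
    (lift0 β α ⊓ lift1 β γ) ⊔ (lift0 β γ ⊓ lift1 β α) < lift0 β α ⊓ lift1 β α := by
  obtain ⟨_, hγα, _, hαβ, _, _, _, _⟩ := h
  have hγleα : γ ≤ α := hγα.le
  -- the easy inequality
  have hle : (lift0 β α ⊓ lift1 β γ) ⊔ (lift0 β γ ⊓ lift1 β α) ≤ lift0 β α ⊓ lift1 β α := by
    apply sup_le
    · exact inf_le_inf le_rfl (fun x y hxy => (hγleα hxy : α x.1.2 y.1.2))
    · exact inf_le_inf (fun x y hxy => (hγleα hxy : α x.1.1 y.1.1)) le_rfl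
  refine lt_of_le_not_ge hle ?_
  intro hge
  -- witness from incomparability
  have h1 := hinc.1
  rw [Setoid.le_def] at h1
  push_neg at h1
  obtain ⟨x, y, hxy, hnot⟩ := h1
  have hα1 : α x.1.1 y.1.1 := hxy.1
  have hγ2 : γ x.1.2 y.1.2 := hxy.2
  have hnγ : ¬ γ x.1.1 y.1.1 := by
    intro hg
    exact hnot (Setoid.inf_iff_and.mpr ⟨hg, hγleα hγ2⟩)
  -- diagonal elements
  set p : Dup β := ⟨(x.1.1, x.1.1), β.refl' _⟩ with hp
  set q : Dup β := ⟨(y.1.1, y.1.1), β.refl' _⟩ with hq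
  have hpq : (lift0 β α ⊓ lift1 β α) p q := Setoid.inf_iff_and.mpr ⟨hα1, hα1⟩
  have hJ := hge hpq
  rw [Setoid.sup_eq_eqvGen] at hJ
  -- key invariant along the equivalence-closure chain
  have key : ∀ z w : Dup β,
      Relation.EqvGen (fun a b => (lift0 β α ⊓ lift1 β γ) a b ∨ (lift0 β γ ⊓ lift1 β α) a b) z w →
      (z.1.1 = z.1.2 ↔ w.1.1 = w.1.2) ∧ (z.1.1 = z.1.2 → γ z.1.1 w.1.1) := by
    intro z w hzw
    induction hzw with
    | rel a b hab =>
      have diag : ∀ c : Dup β, α c.1.1 c.1.2 → c.1.1 = c.1.2 := by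
        intro c hc
        have : (α ⊓ β) c.1.1 c.1.2 := Setoid.inf_iff_and.mpr ⟨hc, c.2⟩
        rw [hαβ] at this
        exact this
      rcases hab with hab | hab
      · obtain ⟨h01, h12⟩ := Setoid.inf_iff_and.mp hab
        have hab1 : α a.1.1 b.1.1 := h01
        have hab2 : γ a.1.2 b.1.2 := h12
        have fwd : a.1.1 = a.1.2 → b.1.1 = b.1.2 := by
          intro ha
          have h' : α a.1.1 b.1.2 := by rw [ha]; exact hγleα hab2
          exact diag b (α.trans' (α.symm' hab1) h')
        constructor
        · constructor
          · exact fwd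
          · intro hb
            have h' : α b.1.1 a.1.2 := by rw [hb]; exact α.symm' (hγleα hab2)
            exact diag a (α.trans' hab1 h')
        · intro ha
          have hb := fwd ha
          show γ a.1.1 b.1.1
          rw [ha, hb]; exact hab2
      · obtain ⟨h01, h12⟩ := Setoid.inf_iff_and.mp hab
        have hab1 : γ a.1.1 b.1.1 := h01
        have hab2 : α a.1.2 b.1.2 := h12
        constructor
        · constructor
          · intro ha
            have h' : α a.1.1 b.1.2 := by rw [ha]; exact hab2
            exact diag b (α.trans' (α.symm' (hγleα hab1)) h')
          · intro hb
            have h' : α b.1.1 a.1.2 := by rw [hb]; exact α.symm' hab2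
            exact diag a (α.trans' (hγleα hab1) h')
        · intro _
          exact hab1
    | refl a => exact ⟨Iff.rfl, fun _ => γ.refl' _⟩
    | symm a b _ ih =>
      exact ⟨ih.1.symm, fun hb => γ.symm' (ih.2 (ih.1.mpr hb))⟩
    | trans a b c _ _ ih1 ih2 =>
      exact ⟨ih1.1.trans ih2.1, fun ha => γ.trans' (ih1.2 ha) (ih2.2 (ih1.1.mp ha))⟩
  have := (key p q hJ).2 rfl
  exact hnγ this
end

section
/- Let A be a type and let α, β, γ, δ be setoids on A forming a pentagon N5. Form the duplication A(β) over β and assume that α₀ ⊓ γ₁ and γ₀ ⊓ α₁ are comparable in Setoid (A(β)). Then the eleven setoids ⊥, γ₀ ⊓ γ₁, α₀ ⊓ α₁, η₀, η₁, γ₀, γ₁, α₀, α₁, β₀, δ₀ are pairwise distinct, the set of these eleven setoids is closed under ⊓ and ⊔ (it is the sublattice of Setoid (A(β)) generated by {α₀, α₁, γ₀, γ₁, β₀}, isomorphic to the lattice M₁ of the paper's Figure 4), and moreover β₀ = β₁, δ₀ = δ₁, α₀ ⊓ γ₁ = γ₀ ⊓ α₁ = γ₀ ⊓ γ₁, γ₀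 ⊔ (α₀ ⊓ α₁) = α₀, γ₁ ⊔ (α₀ ⊓ α₁) = α₁, β₀ ⊓ (α₀ ⊓ α₁) = ⊥, α₀ ⊓ η₁ = ⊥, γ₀ ⊔ η₁ = δ₀, γ₁ ⊔ η₀ = δ₀ and β₀ ⊔ (γ₀ ⊓ γ₁) = δ₀. -/
/-! Common setup: the lattice `Setoid A` of equivalence relations on `A`,
the duplication `Dup β = {p : A × A // β p.1 p.2}`, the lifted setoids
`lift0 β θ = θ₀`, `lift1 β θ = θ₁`, the projection kernels `ker0 β = η₀`,
`ker1 β = η₁`, and relational composition `rc`. -/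

open Relation

variable {A : Type*}

section Helpers

variable {α β γ δ : Setoid A}

lemma rel_eqP (hab : α ⊓ β = ⊥) {p q : A} (h1 : α p q) (h2 : β p q) : p = q := by
  have h3 : (α ⊓ β) p q := ⟨h1, h2⟩
  rw [hab] at h3
  exact h3

lemma lift0_mono (β : Setoid A) {θ θ' : Setoid A} (h : θ ≤ θ') : lift0 β θ ≤ lift0 β θ' :=
  fun x y hxy => show θ' x.1.1 y.1.1 from h (show θ x.1.1 y.1.1 from hxy)

lemma lift1_mono (β : Setoid A) {θ θ' : Setoid A} (h : θ ≤ θ') : lift1 β θ ≤ lift1 β θ' :=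
  fun x y hxy => show θ' x.1.2 y.1.2 from h (show θ x.1.2 y.1.2 from hxy)

lemma ker0_le_lift0 (β θ : Setoid A) : ker0 β ≤ lift0 β θ := by
  intro x y hxy
  show θ.r x.1.1 y.1.1
  rw [show x.1.1 = y.1.1 from hxy]

lemma ker1_le_lift1 (β θ : Setoid A) : ker1 β ≤ lift1 β θ := by
  intro x y hxy
  show θ.r x.1.2 y.1.2
  rw [show x.1.2 = y.1.2 from hxy]

lemma ker1_le_lift0β (β : Setoid A) : ker1 β ≤ lift0 β β := by
  intro x y hxy
  show β.r x.1.1 y.1.1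
  exact β.trans' x.2 (hxy ▸ (β.symm' y.2))

lemma ker0_le_lift1β (β : Setoid A) : ker0 β ≤ lift1 β β := by
  intro x y hxy
  show β.r x.1.2 y.1.2
  exact β.trans' (β.symm' x.2) (hxy ▸ y.2)

lemma beta01 (β : Setoid A) : lift0 β β = lift1 β β := by
  apply Setoid.ext
  intro x y
  constructor
  · intro hxy
    exact β.trans' (β.symm' x.2) (β.trans' hxy y.2)
  · intro hxy
    exact β.trans' x.2 (β.trans' hxy (β.symm' y.2))

lemma delta01 (hbd : β ≤ δ) : lift0 β δ = lift1 β δ := by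
  apply Setoid.ext
  intro x y
  constructor
  · intro hxy
    exact δ.trans' (δ.symm' (hbd x.2)) (δ.trans' hxy (hbd y.2))
  · intro hxy
    exact δ.trans' (hbd x.2) (δ.trans' hxy (δ.symm' (hbd y.2)))

lemma a0_inf_e1 (hab : α ⊓ β = ⊥) : lift0 β α ⊓ ker1 β = (⊥ : Setoid (Dup β)) := by
  apply le_antisymm _ bot_le
  rintro ⟨⟨x1, x2⟩, hx⟩ ⟨⟨y1, y2⟩, hy⟩ ⟨ha, he⟩
  obtain rfl : x2 = y2 := he
  have hb : β x1 y1 := β.trans' hx (β.symm' hy)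
  obtain rfl : x1 = y1 := rel_eqP hab ha hb
  rfl

lemma a1_inf_e0 (hab : α ⊓ β = ⊥) : lift1 β α ⊓ ker0 β = (⊥ : Setoid (Dup β)) := by
  apply le_antisymm _ bot_le
  rintro ⟨⟨x1, x2⟩, hx⟩ ⟨⟨y1, y2⟩, hy⟩ ⟨ha, he⟩
  obtain rfl : x1 = y1 := he
  have hb : β x2 y2 := β.trans' (β.symm' hx) hy
  obtain rfl : x2 = y2 := rel_eqP hab ha hb
  rfl

lemma a0_inf_b (hab : α ⊓ β = ⊥) : lift0 β α ⊓ lift0 β β = ker0 β := by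
  apply le_antisymm
  · rintro x y ⟨ha, hb⟩
    exact rel_eqP hab ha hb
  · exact le_inf (ker0_le_lift0 β α) (ker0_le_lift0 β β)

lemma a1_inf_b (hab : α ⊓ β = ⊥) : lift1 β α ⊓ lift0 β β = ker1 β := by
  rw [beta01]
  apply le_antisymm
  · rintro x y ⟨ha, hb⟩
    exact rel_eqP hab ha hb
  · exact le_inf (ker1_le_lift1 β α) (ker1_le_lift1 β β)

lemma key_eq (hga : γ ≤ α)
    (hcomp : lift0 β α ⊓ lift1 β γ ≤ lift0 β γ ⊓ lift1 β α ∨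
      lift0 β γ ⊓ lift1 β α ≤ lift0 β α ⊓ lift1 β γ) :
    lift0 β α ⊓ lift1 β γ = lift0 β γ ⊓ lift1 β γ ∧
      lift0 β γ ⊓ lift1 β α = lift0 β γ ⊓ lift1 β γ := by
  have heq : lift0 β α ⊓ lift1 β γ = lift0 β γ ⊓ lift1 β α := by
    rcases hcomp with hc | hc
    · apply le_antisymm hc
      intro x y hxy
      have h2 := hc (x := ⟨(x.1.2, x.1.1), β.symm' x.2⟩) (y := ⟨(y.1.2, y.1.1), β.symm' y.2⟩)
        ⟨hxy.2, hxy.1⟩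
      exact ⟨h2.2, h2.1⟩
    · refine le_antisymm ?_ hc
      intro x y hxy
      have h2 := hc (x := ⟨(x.1.2, x.1.1), β.symm' x.2⟩) (y := ⟨(y.1.2, y.1.1), β.symm' y.2⟩)
        ⟨hxy.2, hxy.1⟩
      exact ⟨h2.2, h2.1⟩
  constructor
  · apply le_antisymm
    · exact le_inf (by rw [heq]; exact inf_le_left) inf_le_right
    · exact inf_le_inf (lift0_mono β hga) le_rfl
  · apply le_antisymm
    · exact le_inf inf_le_left (by rw [← heq]; exact inf_le_right)
    · exact inf_le_inf le_rfl (lift1_mono β hga)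

lemma lift0_le_ker0_sup (β θ : Setoid A) :
    lift0 β θ ≤ ker0 β ⊔ (lift0 β θ ⊓ lift1 β θ) := by
  rw [Setoid.sup_eq_eqvGen]
  intro x y hxy
  refine EqvGen.trans _ (⟨(x.1.1, x.1.1), β.refl' _⟩) _ (EqvGen.rel _ _ (Or.inl rfl)) ?_
  refine EqvGen.trans _ (⟨(y.1.1, y.1.1), β.refl' _⟩) _ (EqvGen.rel _ _ (Or.inr ⟨hxy, hxy⟩)) ?_
  exact EqvGen.rel _ _ (Or.inl rfl)

lemma lift1_le_ker1_sup (β θ : Setoid A) :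
    lift1 β θ ≤ ker1 β ⊔ (lift0 β θ ⊓ lift1 β θ) := by
  rw [Setoid.sup_eq_eqvGen]
  intro x y hxy
  refine EqvGen.trans _ (⟨(x.1.2, x.1.2), β.refl' _⟩) _ (EqvGen.rel _ _ (Or.inl rfl)) ?_
  refine EqvGen.trans _ (⟨(y.1.2, y.1.2), β.refl' _⟩) _ (EqvGen.rel _ _ (Or.inr ⟨hxy, hxy⟩)) ?_
  exact EqvGen.rel _ _ (Or.inl rfl)

lemma b_le_e0_sup_e1 (β : Setoid A) : lift0 β β ≤ ker0 β ⊔ ker1 β := by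
  rw [Setoid.sup_eq_eqvGen]
  intro x y hxy
  exact EqvGen.trans _ (⟨(y.1.1, x.1.2), β.trans' (β.symm' hxy) x.2⟩) _
    (EqvGen.rel _ _ (Or.inr rfl)) (EqvGen.rel _ _ (Or.inl rfl))

lemma d_le_sup_aux {S : Setoid (Dup β)} (h5 : γ ⊔ β = δ)
    (h0 : ∀ x : Dup β, S x ⟨(x.1.1, x.1.1), β.refl' _⟩)
    (hg : ∀ a b, γ a b → S ⟨(a, a), β.refl' _⟩ ⟨(b, b), β.refl' _⟩)
    (hb : ∀ a b, β a b → S ⟨(a, a), β.refl' _⟩ ⟨(b, b), β.refl' _⟩) :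
    lift0 β δ ≤ S := by
  intro x y hxy
  have hxy' : (γ ⊔ β) x.1.1 y.1.1 := by rw [h5]; exact hxy
  rw [Setoid.sup_eq_eqvGen] at hxy'
  have hdiag : ∀ a b : A, EqvGen (fun p q => γ p q ∨ β p q) a b →
      S ⟨(a, a), β.refl' _⟩ ⟨(b, b), β.refl' _⟩ := by
    intro a b hab
    induction hab with
    | rel a b hr => rcases hr with hr | hr
                    · exact hg a b hr
                    · exact hb a b hr
    | refl a => exact S.refl' _
    | symm a b _ ih => exact S.symm' ih
    | trans a b c _ _ ih1 ih2 => exact S.trans' ih1 ih2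
  exact S.trans' (h0 x) (S.trans' (hdiag _ _ hxy') (S.symm' (h0 y)))

lemma d_le_c0_sup_e1 (h5 : γ ⊔ β = δ) : lift0 β δ ≤ lift0 β γ ⊔ ker1 β := by
  apply d_le_sup_aux h5
  · intro x
    exact Setoid.le_def.mp le_sup_left (γ.refl' _)
  · intro a b hr
    exact Setoid.le_def.mp le_sup_left hr
  · intro a b hr
    refine (lift0 β γ ⊔ ker1 β).trans'
      (y := ⟨(a, b), hr⟩) (Setoid.le_def.mp le_sup_left (γ.refl' _))
      (Setoid.le_def.mp le_sup_right rfl)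

lemma d_le_e0_sup_c1 (h5 : γ ⊔ β = δ) : lift0 β δ ≤ ker0 β ⊔ lift1 β γ := by
  apply d_le_sup_aux h5
  · intro x
    exact Setoid.le_def.mp le_sup_left rfl
  · intro a b hr
    exact Setoid.le_def.mp le_sup_right hr
  · intro a b hr
    refine (ker0 β ⊔ lift1 β γ).trans'
      (y := ⟨(a, b), hr⟩) (Setoid.le_def.mp le_sup_left rfl)
      (Setoid.le_def.mp le_sup_right (γ.refl' _))

lemma d_le_b_sup_g (h5 : γ ⊔ β = δ) :
    lift0 β δ ≤ lift0 β β ⊔ (lift0 β γ ⊓ lift1 β γ) := by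
  apply d_le_sup_aux h5
  · intro x
    exact Setoid.le_def.mp le_sup_left (β.refl' _)
  · intro a b hr
    exact Setoid.le_def.mp le_sup_right ⟨hr, hr⟩
  · intro a b hr
    exact Setoid.le_def.mp le_sup_left hr

end Helpers


/-- Corollary 3.4: the lattice `M₁` inside `Setoid (A(β))`, Figure 4. -/
theorem M1_sublattice (α β γ δ : Setoid A) (h : IsN5 α β γ δ)
    (hcomp : lift0 β α ⊓ lift1 β γ ≤ lift0 β γ ⊓ lift1 β α ∨
      lift0 β γ ⊓ lift1 β α ≤ lift0 β α ⊓ lift1 β γ) :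
    [(⊥ : Setoid (Dup β)), lift0 β γ ⊓ lift1 β γ, lift0 β α ⊓ lift1 β α,
      ker0 β, ker1 β, lift0 β γ, lift1 β γ, lift0 β α, lift1 β α,
      lift0 β β, lift0 β δ].Pairwise (· ≠ ·) ∧
    (∀ x ∈ ({⊥, lift0 β γ ⊓ lift1 β γ, lift0 β α ⊓ lift1 β α,
        ker0 β, ker1 β, lift0 β γ, lift1 β γ, lift0 β α, lift1 β α,
        lift0 β β, lift0 β δ} : Set (Setoid (Dup β))),
      ∀ y ∈ ({⊥, lift0 β γ ⊓ lift1 β γ, lift0 β α ⊓ lift1 β α,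
        ker0 β, ker1 β, lift0 β γ, lift1 β γ, lift0 β α, lift1 β α,
        lift0 β β, lift0 β δ} : Set (Setoid (Dup β))),
      x ⊓ y ∈ ({⊥, lift0 β γ ⊓ lift1 β γ, lift0 β α ⊓ lift1 β α,
        ker0 β, ker1 β, lift0 β γ, lift1 β γ, lift0 β α, lift1 β α,
        lift0 β β, lift0 β δ} : Set (Setoid (Dup β))) ∧
      x ⊔ y ∈ ({⊥, lift0 β γ ⊓ lift1 β γ, lift0 β α ⊓ lift1 β α,
        ker0 β, ker1 β, lift0 β γ, lift1 β γ, lift0 β α, lift1 β α,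
        lift0 β β, lift0 β δ} : Set (Setoid (Dup β)))) ∧
    lift0 β β = lift1 β β ∧
    lift0 β δ = lift1 β δ ∧
    lift0 β α ⊓ lift1 β γ = lift0 β γ ⊓ lift1 β α ∧
    lift0 β γ ⊓ lift1 β α = lift0 β γ ⊓ lift1 β γ ∧
    lift0 β γ ⊔ (lift0 β α ⊓ lift1 β α) = lift0 β α ∧
    lift1 β γ ⊔ (lift0 β α ⊓ lift1 β α) = lift1 β α ∧
    lift0 β β ⊓ (lift0 β α ⊓ lift1 β α) = ⊥ ∧
    lift0 β α ⊓ ker1 β = ⊥ ∧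
    lift0 β γ ⊔ ker1 β = lift0 β δ ∧
    lift1 β γ ⊔ ker0 β = lift0 β δ ∧
    lift0 β β ⊔ (lift0 β γ ⊓ lift1 β γ) = lift0 β δ := by
  obtain ⟨hg_bot, hga', had', hab4, h5, h6, hbne, hbd'⟩ := h
  have hga : γ ≤ α := hga'.le
  have had : α ≤ δ := had'.le
  have hbd : β ≤ δ := by rw [← h5]; exact le_sup_right
  have hgd : γ ≤ δ := hga.trans had
  have lb01 : lift0 β β = lift1 β β := beta01 β
  have ld01 : lift0 β δ = lift1 β δ := delta01 hbd
  have hkey := key_eq hga hcomp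
  obtain ⟨p1, q1, hg1, hne1⟩ : ∃ p q : A, γ p q ∧ p ≠ q := by
    by_contra hcon
    push_neg at hcon
    exact hg_bot.ne' (le_antisymm (fun p q hpq => hcon p q hpq) bot_le)
  obtain ⟨p2, q2, ha2, hng2⟩ : ∃ p q : A, α p q ∧ ¬ γ p q := by
    by_contra hcon
    push_neg at hcon
    exact (show γ < α from hga').not_ge fun p q hpq => hcon p q hpq
  have hne2 : p2 ≠ q2 := fun e => hng2 (e ▸ γ.refl' p2)
  obtain ⟨u, v, huv, hneuv⟩ : ∃ p q : A, β p q ∧ p ≠ q := by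
    by_contra hcon
    push_neg at hcon
    exact hbne (le_antisymm (fun p q hpq => hcon p q hpq) bot_le)
  have le_1_2 : (lift0 β γ ⊓ lift1 β γ) ≤ (lift0 β α ⊓ lift1 β α) := inf_le_inf (lift0_mono β hga) (lift1_mono β hga)
  have le_1_5 : (lift0 β γ ⊓ lift1 β γ) ≤ (lift0 β γ) := inf_le_left
  have le_1_6 : (lift0 β γ ⊓ lift1 β γ) ≤ (lift1 β γ) := inf_le_right
  have le_2_7 : (lift0 β α ⊓ lift1 β α) ≤ (lift0 β α) := inf_le_left
  have le_2_8 : (lift0 β α ⊓ lift1 β α) ≤ (lift1 β α) := inf_le_right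
  have le_3_5 : (ker0 β) ≤ (lift0 β γ) := ker0_le_lift0 β γ
  have le_3_9 : (ker0 β) ≤ (lift0 β β) := ker0_le_lift0 β β
  have le_4_6 : (ker1 β) ≤ (lift1 β γ) := ker1_le_lift1 β γ
  have le_4_9 : (ker1 β) ≤ (lift0 β β) := ker1_le_lift0β β
  have le_5_7 : (lift0 β γ) ≤ (lift0 β α) := lift0_mono β hga
  have le_6_8 : (lift1 β γ) ≤ (lift1 β α) := lift1_mono β hga
  have le_7_10 : (lift0 β α) ≤ (lift0 β δ) := lift0_mono β had
  have le_8_10 : (lift1 β α) ≤ (lift0 β δ) := by rw [ld01]; exact lift1_mono β had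
  have le_9_10 : (lift0 β β) ≤ (lift0 β δ) := lift0_mono β hbd
  have le_1_7 : (lift0 β γ ⊓ lift1 β γ) ≤ (lift0 β α) := le_1_5.trans le_5_7
  have le_1_8 : (lift0 β γ ⊓ lift1 β γ) ≤ (lift1 β α) := le_1_6.trans le_6_8
  have le_1_10 : (lift0 β γ ⊓ lift1 β γ) ≤ (lift0 β δ) := le_1_7.trans le_7_10
  have le_2_10 : (lift0 β α ⊓ lift1 β α) ≤ (lift0 β δ) := le_2_7.trans le_7_10
  have le_3_7 : (ker0 β) ≤ (lift0 β α) := le_3_5.trans le_5_7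
  have le_3_10 : (ker0 β) ≤ (lift0 β δ) := le_3_7.trans le_7_10
  have le_4_8 : (ker1 β) ≤ (lift1 β α) := le_4_6.trans le_6_8
  have le_4_10 : (ker1 β) ≤ (lift0 β δ) := le_4_8.trans le_8_10
  have le_5_10 : (lift0 β γ) ≤ (lift0 β δ) := le_5_7.trans le_7_10
  have le_6_10 : (lift1 β γ) ≤ (lift0 β δ) := le_6_8.trans le_8_10
  have zA0E1 := a0_inf_e1 hab4
  have zA1E0 := a1_inf_e0 hab4
  have mA0B := a0_inf_b hab4
  have mA1B := a1_inf_b hab4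
  have e85 : (lift1 β α) ⊓ (lift0 β γ) = (lift0 β γ ⊓ lift1 β γ) := by rw [inf_comm]; exact hkey.2
  have meq_1_2 : (lift0 β γ ⊓ lift1 β γ) ⊓ (lift0 β α ⊓ lift1 β α) = (lift0 β γ ⊓ lift1 β γ) := inf_eq_left.mpr le_1_2
  have meq_1_3 : (lift0 β γ ⊓ lift1 β γ) ⊓ (ker0 β) = (⊥ : Setoid (Dup β)) := le_antisymm ((inf_le_inf le_1_8 le_rfl).trans zA1E0.le) bot_le
  have meq_1_4 : (lift0 β γ ⊓ lift1 β γ) ⊓ (ker1 β) = (⊥ : Setoid (Dup β)) := le_antisymm ((inf_le_inf le_1_7 le_rfl).trans zA0E1.le) bot_le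
  have meq_1_5 : (lift0 β γ ⊓ lift1 β γ) ⊓ (lift0 β γ) = (lift0 β γ ⊓ lift1 β γ) := inf_eq_left.mpr le_1_5
  have meq_1_6 : (lift0 β γ ⊓ lift1 β γ) ⊓ (lift1 β γ) = (lift0 β γ ⊓ lift1 β γ) := inf_eq_left.mpr le_1_6
  have meq_1_7 : (lift0 β γ ⊓ lift1 β γ) ⊓ (lift0 β α) = (lift0 β γ ⊓ lift1 β γ) := inf_eq_left.mpr le_1_7
  have meq_1_8 : (lift0 β γ ⊓ lift1 β γ) ⊓ (lift1 β α) = (lift0 β γ ⊓ lift1 β γ) := inf_eq_left.mpr le_1_8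
  have meq_1_10 : (lift0 β γ ⊓ lift1 β γ) ⊓ (lift0 β δ) = (lift0 β γ ⊓ lift1 β γ) := inf_eq_left.mpr le_1_10
  have meq_2_3 : (lift0 β α ⊓ lift1 β α) ⊓ (ker0 β) = (⊥ : Setoid (Dup β)) := le_antisymm ((inf_le_inf le_2_8 le_rfl).trans zA1E0.le) bot_le
  have meq_2_4 : (lift0 β α ⊓ lift1 β α) ⊓ (ker1 β) = (⊥ : Setoid (Dup β)) := le_antisymm ((inf_le_inf le_2_7 le_rfl).trans zA0E1.le) bot_le
  have meq_2_7 : (lift0 β α ⊓ lift1 β α) ⊓ (lift0 β α) = (lift0 β α ⊓ lift1 β α) := inf_eq_left.mpr le_2_7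
  have meq_2_8 : (lift0 β α ⊓ lift1 β α) ⊓ (lift1 β α) = (lift0 β α ⊓ lift1 β α) := inf_eq_left.mpr le_2_8
  have meq_2_10 : (lift0 β α ⊓ lift1 β α) ⊓ (lift0 β δ) = (lift0 β α ⊓ lift1 β α) := inf_eq_left.mpr le_2_10
  have meq_3_4 : (ker0 β) ⊓ (ker1 β) = (⊥ : Setoid (Dup β)) := le_antisymm ((inf_le_inf le_3_7 le_rfl).trans zA0E1.le) bot_le
  have meq_3_5 : (ker0 β) ⊓ (lift0 β γ) = (ker0 β) := inf_eq_left.mpr le_3_5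
  have meq_3_7 : (ker0 β) ⊓ (lift0 β α) = (ker0 β) := inf_eq_left.mpr le_3_7
  have meq_3_8 : (ker0 β) ⊓ (lift1 β α) = (⊥ : Setoid (Dup β)) := by rw [inf_comm]; exact zA1E0
  have meq_3_9 : (ker0 β) ⊓ (lift0 β β) = (ker0 β) := inf_eq_left.mpr le_3_9
  have meq_3_10 : (ker0 β) ⊓ (lift0 β δ) = (ker0 β) := inf_eq_left.mpr le_3_10
  have meq_4_6 : (ker1 β) ⊓ (lift1 β γ) = (ker1 β) := inf_eq_left.mpr le_4_6
  have meq_4_7 : (ker1 β) ⊓ (lift0 β α) = (⊥ : Setoid (Dup β)) := by rw [inf_comm]; exact zA0E1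
  have meq_4_8 : (ker1 β) ⊓ (lift1 β α) = (ker1 β) := inf_eq_left.mpr le_4_8
  have meq_4_9 : (ker1 β) ⊓ (lift0 β β) = (ker1 β) := inf_eq_left.mpr le_4_9
  have meq_4_10 : (ker1 β) ⊓ (lift0 β δ) = (ker1 β) := inf_eq_left.mpr le_4_10
  have meq_5_7 : (lift0 β γ) ⊓ (lift0 β α) = (lift0 β γ) := inf_eq_left.mpr le_5_7
  have meq_5_8 : (lift0 β γ) ⊓ (lift1 β α) = (lift0 β γ ⊓ lift1 β γ) := hkey.2
  have meq_5_10 : (lift0 β γ) ⊓ (lift0 β δ) = (lift0 β γ) := inf_eq_left.mpr le_5_10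
  have meq_6_7 : (lift1 β γ) ⊓ (lift0 β α) = (lift0 β γ ⊓ lift1 β γ) := by rw [inf_comm]; exact hkey.1
  have meq_6_8 : (lift1 β γ) ⊓ (lift1 β α) = (lift1 β γ) := inf_eq_left.mpr le_6_8
  have meq_6_10 : (lift1 β γ) ⊓ (lift0 β δ) = (lift1 β γ) := inf_eq_left.mpr le_6_10
  have meq_7_9 : (lift0 β α) ⊓ (lift0 β β) = (ker0 β) := mA0B
  have meq_7_10 : (lift0 β α) ⊓ (lift0 β δ) = (lift0 β α) := inf_eq_left.mpr le_7_10
  have meq_8_9 : (lift1 β α) ⊓ (lift0 β β) = (ker1 β) := mA1B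
  have meq_8_10 : (lift1 β α) ⊓ (lift0 β δ) = (lift1 β α) := inf_eq_left.mpr le_8_10
  have meq_9_10 : (lift0 β β) ⊓ (lift0 β δ) = (lift0 β β) := inf_eq_left.mpr le_9_10
  have meq_2_5 : (lift0 β α ⊓ lift1 β α) ⊓ (lift0 β γ) = (lift0 β γ ⊓ lift1 β γ) := le_antisymm ((inf_le_inf le_2_8 le_rfl).trans e85.le) (le_inf le_1_2 le_1_5)
  have meq_2_6 : (lift0 β α ⊓ lift1 β α) ⊓ (lift1 β γ) = (lift0 β γ ⊓ lift1 β γ) := le_antisymm ((inf_le_inf le_2_7 le_rfl).trans hkey.1.le) (le_inf le_1_2 le_1_6)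
  have meq_3_6 : (ker0 β) ⊓ (lift1 β γ) = (⊥ : Setoid (Dup β)) := le_antisymm ((inf_le_inf le_rfl le_6_8).trans meq_3_8.le) bot_le
  have meq_4_5 : (ker1 β) ⊓ (lift0 β γ) = (⊥ : Setoid (Dup β)) := le_antisymm ((inf_le_inf le_rfl le_5_7).trans meq_4_7.le) bot_le
  have meq_5_6 : (lift0 β γ) ⊓ (lift1 β γ) = (lift0 β γ ⊓ lift1 β γ) := le_antisymm ((inf_le_inf le_rfl le_6_8).trans hkey.2.le) (le_inf le_1_5 le_1_6)
  have meq_5_9 : (lift0 β γ) ⊓ (lift0 β β) = (ker0 β) := le_antisymm ((inf_le_inf le_5_7 le_rfl).trans mA0B.le) (le_inf le_3_5 le_3_9)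
  have meq_6_9 : (lift1 β γ) ⊓ (lift0 β β) = (ker1 β) := le_antisymm ((inf_le_inf le_6_8 le_rfl).trans mA1B.le) (le_inf le_4_6 le_4_9)
  have meq_7_8 : (lift0 β α) ⊓ (lift1 β α) = (lift0 β α ⊓ lift1 β α) := rfl
  have meq_2_9 : (lift0 β α ⊓ lift1 β α) ⊓ (lift0 β β) = (⊥ : Setoid (Dup β)) := by
    apply le_antisymm _ bot_le
    have h1 : (lift0 β α ⊓ lift1 β α) ⊓ (lift0 β β) ≤ ker0 β := by rw [← mA0B]; exact inf_le_inf le_2_7 le_rfl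
    have h2 : (lift0 β α ⊓ lift1 β α) ⊓ (lift0 β β) ≤ ker1 β := by rw [← mA1B]; exact inf_le_inf le_2_8 le_rfl
    exact (le_inf h1 h2).trans meq_3_4.le
  have meq_1_9 : (lift0 β γ ⊓ lift1 β γ) ⊓ (lift0 β β) = (⊥ : Setoid (Dup β)) := le_antisymm ((inf_le_inf le_1_2 le_rfl).trans meq_2_9.le) bot_le
  have jd1 := d_le_c0_sup_e1 h5
  have jd2 := d_le_e0_sup_c1 h5
  have jd3 := d_le_b_sup_g h5
  have jeq_1_2 : (lift0 β γ ⊓ lift1 β γ) ⊔ (lift0 β α ⊓ lift1 β α) = (lift0 β α ⊓ lift1 β α) := sup_eq_right.mpr le_1_2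
  have jeq_1_3 : (lift0 β γ ⊓ lift1 β γ) ⊔ (ker0 β) = (lift0 β γ) := le_antisymm (sup_le le_1_5 le_3_5) ((lift0_le_ker0_sup β γ).trans (sup_comm _ _).le)
  have jeq_1_4 : (lift0 β γ ⊓ lift1 β γ) ⊔ (ker1 β) = (lift1 β γ) := le_antisymm (sup_le le_1_6 le_4_6) ((lift1_le_ker1_sup β γ).trans (sup_comm _ _).le)
  have jeq_1_5 : (lift0 β γ ⊓ lift1 β γ) ⊔ (lift0 β γ) = (lift0 β γ) := sup_eq_right.mpr le_1_5
  have jeq_1_6 : (lift0 β γ ⊓ lift1 β γ) ⊔ (lift1 β γ) = (lift1 β γ) := sup_eq_right.mpr le_1_6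
  have jeq_1_7 : (lift0 β γ ⊓ lift1 β γ) ⊔ (lift0 β α) = (lift0 β α) := sup_eq_right.mpr le_1_7
  have jeq_1_8 : (lift0 β γ ⊓ lift1 β γ) ⊔ (lift1 β α) = (lift1 β α) := sup_eq_right.mpr le_1_8
  have jeq_1_9 : (lift0 β γ ⊓ lift1 β γ) ⊔ (lift0 β β) = (lift0 β δ) := le_antisymm (sup_le le_1_10 le_9_10) (jd3.trans (sup_comm _ _).le)
  have jeq_1_10 : (lift0 β γ ⊓ lift1 β γ) ⊔ (lift0 β δ) = (lift0 β δ) := sup_eq_right.mpr le_1_10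
  have jeq_2_3 : (lift0 β α ⊓ lift1 β α) ⊔ (ker0 β) = (lift0 β α) := le_antisymm (sup_le le_2_7 le_3_7) ((lift0_le_ker0_sup β α).trans (sup_comm _ _).le)
  have jeq_2_4 : (lift0 β α ⊓ lift1 β α) ⊔ (ker1 β) = (lift1 β α) := le_antisymm (sup_le le_2_8 le_4_8) ((lift1_le_ker1_sup β α).trans (sup_comm _ _).le)
  have jeq_2_5 : (lift0 β α ⊓ lift1 β α) ⊔ (lift0 β γ) = (lift0 β α) := le_antisymm (sup_le le_2_7 le_5_7) ((lift0_le_ker0_sup β α).trans ((sup_le_sup_right le_3_5 _).trans (sup_comm _ _).le))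
  have jeq_2_6 : (lift0 β α ⊓ lift1 β α) ⊔ (lift1 β γ) = (lift1 β α) := le_antisymm (sup_le le_2_8 le_6_8) ((lift1_le_ker1_sup β α).trans ((sup_le_sup_right le_4_6 _).trans (sup_comm _ _).le))
  have jeq_2_7 : (lift0 β α ⊓ lift1 β α) ⊔ (lift0 β α) = (lift0 β α) := sup_eq_right.mpr le_2_7
  have jeq_2_8 : (lift0 β α ⊓ lift1 β α) ⊔ (lift1 β α) = (lift1 β α) := sup_eq_right.mpr le_2_8
  have jeq_2_9 : (lift0 β α ⊓ lift1 β α) ⊔ (lift0 β β) = (lift0 β δ) := le_antisymm (sup_le le_2_10 le_9_10) (jd3.trans (sup_le le_sup_right (le_1_2.trans le_sup_left)))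
  have jeq_2_10 : (lift0 β α ⊓ lift1 β α) ⊔ (lift0 β δ) = (lift0 β δ) := sup_eq_right.mpr le_2_10
  have jeq_3_4 : (ker0 β) ⊔ (ker1 β) = (lift0 β β) := le_antisymm (sup_le le_3_9 le_4_9) (b_le_e0_sup_e1 β)
  have jeq_3_5 : (ker0 β) ⊔ (lift0 β γ) = (lift0 β γ) := sup_eq_right.mpr le_3_5
  have jeq_3_6 : (ker0 β) ⊔ (lift1 β γ) = (lift0 β δ) := le_antisymm (sup_le le_3_10 le_6_10) jd2
  have jeq_3_7 : (ker0 β) ⊔ (lift0 β α) = (lift0 β α) := sup_eq_right.mpr le_3_7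
  have jeq_3_8 : (ker0 β) ⊔ (lift1 β α) = (lift0 β δ) := le_antisymm (sup_le le_3_10 le_8_10) (jd2.trans (sup_le le_sup_left (le_6_8.trans le_sup_right)))
  have jeq_3_9 : (ker0 β) ⊔ (lift0 β β) = (lift0 β β) := sup_eq_right.mpr le_3_9
  have jeq_3_10 : (ker0 β) ⊔ (lift0 β δ) = (lift0 β δ) := sup_eq_right.mpr le_3_10
  have jeq_4_5 : (ker1 β) ⊔ (lift0 β γ) = (lift0 β δ) := le_antisymm (sup_le le_4_10 le_5_10) (jd1.trans (sup_comm _ _).le)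
  have jeq_4_6 : (ker1 β) ⊔ (lift1 β γ) = (lift1 β γ) := sup_eq_right.mpr le_4_6
  have jeq_4_7 : (ker1 β) ⊔ (lift0 β α) = (lift0 β δ) := le_antisymm (sup_le le_4_10 le_7_10) (jd1.trans (sup_le (le_5_7.trans le_sup_right) le_sup_left))
  have jeq_4_8 : (ker1 β) ⊔ (lift1 β α) = (lift1 β α) := sup_eq_right.mpr le_4_8
  have jeq_4_9 : (ker1 β) ⊔ (lift0 β β) = (lift0 β β) := sup_eq_right.mpr le_4_9
  have jeq_4_10 : (ker1 β) ⊔ (lift0 β δ) = (lift0 β δ) := sup_eq_right.mpr le_4_10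
  have jeq_5_6 : (lift0 β γ) ⊔ (lift1 β γ) = (lift0 β δ) := le_antisymm (sup_le le_5_10 le_6_10) (jd2.trans (sup_le (le_3_5.trans le_sup_left) le_sup_right))
  have jeq_5_7 : (lift0 β γ) ⊔ (lift0 β α) = (lift0 β α) := sup_eq_right.mpr le_5_7
  have jeq_5_8 : (lift0 β γ) ⊔ (lift1 β α) = (lift0 β δ) := le_antisymm (sup_le le_5_10 le_8_10) (jd2.trans (sup_le (le_3_5.trans le_sup_left) (le_6_8.trans le_sup_right)))
  have jeq_5_9 : (lift0 β γ) ⊔ (lift0 β β) = (lift0 β δ) := le_antisymm (sup_le le_5_10 le_9_10) (jd1.trans (sup_le le_sup_left (le_4_9.trans le_sup_right)))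
  have jeq_5_10 : (lift0 β γ) ⊔ (lift0 β δ) = (lift0 β δ) := sup_eq_right.mpr le_5_10
  have jeq_6_7 : (lift1 β γ) ⊔ (lift0 β α) = (lift0 β δ) := le_antisymm (sup_le le_6_10 le_7_10) (jd2.trans (sup_le (le_3_7.trans le_sup_right) le_sup_left))
  have jeq_6_8 : (lift1 β γ) ⊔ (lift1 β α) = (lift1 β α) := sup_eq_right.mpr le_6_8
  have jeq_6_9 : (lift1 β γ) ⊔ (lift0 β β) = (lift0 β δ) := le_antisymm (sup_le le_6_10 le_9_10) (jd2.trans (sup_le (le_3_9.trans le_sup_right) le_sup_left))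
  have jeq_6_10 : (lift1 β γ) ⊔ (lift0 β δ) = (lift0 β δ) := sup_eq_right.mpr le_6_10
  have jeq_7_8 : (lift0 β α) ⊔ (lift1 β α) = (lift0 β δ) := le_antisymm (sup_le le_7_10 le_8_10) (jd1.trans (sup_le (le_5_7.trans le_sup_left) (le_4_8.trans le_sup_right)))
  have jeq_7_9 : (lift0 β α) ⊔ (lift0 β β) = (lift0 β δ) := le_antisymm (sup_le le_7_10 le_9_10) (jd1.trans (sup_le (le_5_7.trans le_sup_left) (le_4_9.trans le_sup_right)))
  have jeq_7_10 : (lift0 β α) ⊔ (lift0 β δ) = (lift0 β δ) := sup_eq_right.mpr le_7_10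
  have jeq_8_9 : (lift1 β α) ⊔ (lift0 β β) = (lift0 β δ) := le_antisymm (sup_le le_8_10 le_9_10) (jd2.trans (sup_le (le_3_9.trans le_sup_right) (le_6_8.trans le_sup_left)))
  have jeq_8_10 : (lift1 β α) ⊔ (lift0 β δ) = (lift0 β δ) := sup_eq_right.mpr le_8_10
  have jeq_9_10 : (lift0 β β) ⊔ (lift0 β δ) = (lift0 β δ) := sup_eq_right.mpr le_9_10
  have F_0_0 : ¬ (⊥ : Setoid (Dup β)) (⟨(p1, p1), β.refl' p1⟩ : Dup β) (⟨(q1, q1), β.refl' q1⟩ : Dup β) := fun he => hne1 (congrArg (fun z : Dup β => z.1.1) he)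
  have F_0_2 : ¬ (⊥ : Setoid (Dup β)) (⟨(u, v), huv⟩ : Dup β) (⟨(u, u), β.refl' u⟩ : Dup β) := fun he => hneuv (congrArg (fun z : Dup β => z.1.2) he).symm
  have F_0_3 : ¬ (⊥ : Setoid (Dup β)) (⟨(u, v), huv⟩ : Dup β) (⟨(v, v), β.refl' v⟩ : Dup β) := fun he => hneuv (congrArg (fun z : Dup β => z.1.1) he)
  have T_1_0 : (lift0 β γ ⊓ lift1 β γ) (⟨(p1, p1), β.refl' p1⟩ : Dup β) (⟨(q1, q1), β.refl' q1⟩ : Dup β) := ⟨hg1, hg1⟩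
  have F_1_1 : ¬ (lift0 β γ ⊓ lift1 β γ) (⟨(p2, p2), β.refl' p2⟩ : Dup β) (⟨(q2, q2), β.refl' q2⟩ : Dup β) := fun hq => hng2 hq.1
  have F_1_2 : ¬ (lift0 β γ ⊓ lift1 β γ) (⟨(u, v), huv⟩ : Dup β) (⟨(u, u), β.refl' u⟩ : Dup β) := fun hq => hneuv (rel_eqP hab4 (hga hq.2) (β.symm' huv)).symm
  have F_1_3 : ¬ (lift0 β γ ⊓ lift1 β γ) (⟨(u, v), huv⟩ : Dup β) (⟨(v, v), β.refl' v⟩ : Dup β) := fun hq => hneuv (rel_eqP hab4 (hga hq.1) huv)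
  have T_2_0 : (lift0 β α ⊓ lift1 β α) (⟨(p1, p1), β.refl' p1⟩ : Dup β) (⟨(q1, q1), β.refl' q1⟩ : Dup β) := ⟨hga hg1, hga hg1⟩
  have T_2_1 : (lift0 β α ⊓ lift1 β α) (⟨(p2, p2), β.refl' p2⟩ : Dup β) (⟨(q2, q2), β.refl' q2⟩ : Dup β) := ⟨ha2, ha2⟩
  have F_2_2 : ¬ (lift0 β α ⊓ lift1 β α) (⟨(u, v), huv⟩ : Dup β) (⟨(u, u), β.refl' u⟩ : Dup β) := fun hq => hneuv (rel_eqP hab4 hq.2 (β.symm' huv)).symm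
  have F_2_3 : ¬ (lift0 β α ⊓ lift1 β α) (⟨(u, v), huv⟩ : Dup β) (⟨(v, v), β.refl' v⟩ : Dup β) := fun hq => hneuv (rel_eqP hab4 hq.1 huv)
  have F_3_0 : ¬ (ker0 β) (⟨(p1, p1), β.refl' p1⟩ : Dup β) (⟨(q1, q1), β.refl' q1⟩ : Dup β) := fun he => hne1 he
  have T_3_2 : (ker0 β) (⟨(u, v), huv⟩ : Dup β) (⟨(u, u), β.refl' u⟩ : Dup β) := rfl
  have F_3_3 : ¬ (ker0 β) (⟨(u, v), huv⟩ : Dup β) (⟨(v, v), β.refl' v⟩ : Dup β) := fun he => hneuv he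
  have F_4_0 : ¬ (ker1 β) (⟨(p1, p1), β.refl' p1⟩ : Dup β) (⟨(q1, q1), β.refl' q1⟩ : Dup β) := fun he => hne1 he
  have F_4_2 : ¬ (ker1 β) (⟨(u, v), huv⟩ : Dup β) (⟨(u, u), β.refl' u⟩ : Dup β) := fun he => hneuv (Eq.symm he)
  have T_4_3 : (ker1 β) (⟨(u, v), huv⟩ : Dup β) (⟨(v, v), β.refl' v⟩ : Dup β) := rfl
  have T_5_0 : (lift0 β γ) (⟨(p1, p1), β.refl' p1⟩ : Dup β) (⟨(q1, q1), β.refl' q1⟩ : Dup β) := hg1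
  have F_5_1 : ¬ (lift0 β γ) (⟨(p2, p2), β.refl' p2⟩ : Dup β) (⟨(q2, q2), β.refl' q2⟩ : Dup β) := fun hq => hng2 hq
  have T_5_2 : (lift0 β γ) (⟨(u, v), huv⟩ : Dup β) (⟨(u, u), β.refl' u⟩ : Dup β) := γ.refl' u
  have T_6_0 : (lift1 β γ) (⟨(p1, p1), β.refl' p1⟩ : Dup β) (⟨(q1, q1), β.refl' q1⟩ : Dup β) := hg1
  have F_6_1 : ¬ (lift1 β γ) (⟨(p2, p2), β.refl' p2⟩ : Dup β) (⟨(q2, q2), β.refl' q2⟩ : Dup β) := fun hq => hng2 hq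
  have F_6_2 : ¬ (lift1 β γ) (⟨(u, v), huv⟩ : Dup β) (⟨(u, u), β.refl' u⟩ : Dup β) := fun hq => hneuv (rel_eqP hab4 (hga hq) (β.symm' huv)).symm
  have T_6_3 : (lift1 β γ) (⟨(u, v), huv⟩ : Dup β) (⟨(v, v), β.refl' v⟩ : Dup β) := γ.refl' v
  have T_7_0 : (lift0 β α) (⟨(p1, p1), β.refl' p1⟩ : Dup β) (⟨(q1, q1), β.refl' q1⟩ : Dup β) := hga hg1
  have T_7_1 : (lift0 β α) (⟨(p2, p2), β.refl' p2⟩ : Dup β) (⟨(q2, q2), β.refl' q2⟩ : Dup β) := ha2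
  have T_7_2 : (lift0 β α) (⟨(u, v), huv⟩ : Dup β) (⟨(u, u), β.refl' u⟩ : Dup β) := α.refl' u
  have F_7_3 : ¬ (lift0 β α) (⟨(u, v), huv⟩ : Dup β) (⟨(v, v), β.refl' v⟩ : Dup β) := fun hq => hneuv (rel_eqP hab4 hq huv)
  have T_8_0 : (lift1 β α) (⟨(p1, p1), β.refl' p1⟩ : Dup β) (⟨(q1, q1), β.refl' q1⟩ : Dup β) := hga hg1
  have T_8_1 : (lift1 β α) (⟨(p2, p2), β.refl' p2⟩ : Dup β) (⟨(q2, q2), β.refl' q2⟩ : Dup β) := ha2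
  have F_8_2 : ¬ (lift1 β α) (⟨(u, v), huv⟩ : Dup β) (⟨(u, u), β.refl' u⟩ : Dup β) := fun hq => hneuv (rel_eqP hab4 hq (β.symm' huv)).symm
  have T_8_3 : (lift1 β α) (⟨(u, v), huv⟩ : Dup β) (⟨(v, v), β.refl' v⟩ : Dup β) := α.refl' v
  have F_9_0 : ¬ (lift0 β β) (⟨(p1, p1), β.refl' p1⟩ : Dup β) (⟨(q1, q1), β.refl' q1⟩ : Dup β) := fun hb => hne1 (rel_eqP hab4 (hga hg1) hb)
  have T_9_2 : (lift0 β β) (⟨(u, v), huv⟩ : Dup β) (⟨(u, u), β.refl' u⟩ : Dup β) := β.refl' u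
  have T_9_3 : (lift0 β β) (⟨(u, v), huv⟩ : Dup β) (⟨(v, v), β.refl' v⟩ : Dup β) := huv
  have T_10_0 : (lift0 β δ) (⟨(p1, p1), β.refl' p1⟩ : Dup β) (⟨(q1, q1), β.refl' q1⟩ : Dup β) := hgd hg1
  have T_10_1 : (lift0 β δ) (⟨(p2, p2), β.refl' p2⟩ : Dup β) (⟨(q2, q2), β.refl' q2⟩ : Dup β) := had ha2
  have T_10_2 : (lift0 β δ) (⟨(u, v), huv⟩ : Dup β) (⟨(u, u), β.refl' u⟩ : Dup β) := δ.refl' u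
  have T_10_3 : (lift0 β δ) (⟨(u, v), huv⟩ : Dup β) (⟨(v, v), β.refl' v⟩ : Dup β) := hbd huv
  have ne_0_1 : (⊥ : Setoid (Dup β)) ≠ (lift0 β γ ⊓ lift1 β γ) := fun he => F_0_0 (by rw [he]; exact T_1_0)
  have ne_0_2 : (⊥ : Setoid (Dup β)) ≠ (lift0 β α ⊓ lift1 β α) := fun he => F_0_0 (by rw [he]; exact T_2_0)
  have ne_0_3 : (⊥ : Setoid (Dup β)) ≠ (ker0 β) := fun he => F_0_2 (by rw [he]; exact T_3_2)
  have ne_0_4 : (⊥ : Setoid (Dup β)) ≠ (ker1 β) := fun he => F_0_3 (by rw [he]; exact T_4_3)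
  have ne_0_5 : (⊥ : Setoid (Dup β)) ≠ (lift0 β γ) := fun he => F_0_0 (by rw [he]; exact T_5_0)
  have ne_0_6 : (⊥ : Setoid (Dup β)) ≠ (lift1 β γ) := fun he => F_0_0 (by rw [he]; exact T_6_0)
  have ne_0_7 : (⊥ : Setoid (Dup β)) ≠ (lift0 β α) := fun he => F_0_0 (by rw [he]; exact T_7_0)
  have ne_0_8 : (⊥ : Setoid (Dup β)) ≠ (lift1 β α) := fun he => F_0_0 (by rw [he]; exact T_8_0)
  have ne_0_9 : (⊥ : Setoid (Dup β)) ≠ (lift0 β β) := fun he => F_0_2 (by rw [he]; exact T_9_2)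
  have ne_0_10 : (⊥ : Setoid (Dup β)) ≠ (lift0 β δ) := fun he => F_0_0 (by rw [he]; exact T_10_0)
  have ne_1_2 : (lift0 β γ ⊓ lift1 β γ) ≠ (lift0 β α ⊓ lift1 β α) := fun he => F_1_1 (by rw [he]; exact T_2_1)
  have ne_1_3 : (lift0 β γ ⊓ lift1 β γ) ≠ (ker0 β) := fun he => F_3_0 (by rw [← he]; exact T_1_0)
  have ne_1_4 : (lift0 β γ ⊓ lift1 β γ) ≠ (ker1 β) := fun he => F_4_0 (by rw [← he]; exact T_1_0)
  have ne_1_5 : (lift0 β γ ⊓ lift1 β γ) ≠ (lift0 β γ) := fun he => F_1_2 (by rw [he]; exact T_5_2)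
  have ne_1_6 : (lift0 β γ ⊓ lift1 β γ) ≠ (lift1 β γ) := fun he => F_1_3 (by rw [he]; exact T_6_3)
  have ne_1_7 : (lift0 β γ ⊓ lift1 β γ) ≠ (lift0 β α) := fun he => F_1_1 (by rw [he]; exact T_7_1)
  have ne_1_8 : (lift0 β γ ⊓ lift1 β γ) ≠ (lift1 β α) := fun he => F_1_1 (by rw [he]; exact T_8_1)
  have ne_1_9 : (lift0 β γ ⊓ lift1 β γ) ≠ (lift0 β β) := fun he => F_9_0 (by rw [← he]; exact T_1_0)
  have ne_1_10 : (lift0 β γ ⊓ lift1 β γ) ≠ (lift0 β δ) := fun he => F_1_1 (by rw [he]; exact T_10_1)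
  have ne_2_3 : (lift0 β α ⊓ lift1 β α) ≠ (ker0 β) := fun he => F_3_0 (by rw [← he]; exact T_2_0)
  have ne_2_4 : (lift0 β α ⊓ lift1 β α) ≠ (ker1 β) := fun he => F_4_0 (by rw [← he]; exact T_2_0)
  have ne_2_5 : (lift0 β α ⊓ lift1 β α) ≠ (lift0 β γ) := fun he => F_5_1 (by rw [← he]; exact T_2_1)
  have ne_2_6 : (lift0 β α ⊓ lift1 β α) ≠ (lift1 β γ) := fun he => F_6_1 (by rw [← he]; exact T_2_1)
  have ne_2_7 : (lift0 β α ⊓ lift1 β α) ≠ (lift0 β α) := fun he => F_2_2 (by rw [he]; exact T_7_2)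
  have ne_2_8 : (lift0 β α ⊓ lift1 β α) ≠ (lift1 β α) := fun he => F_2_3 (by rw [he]; exact T_8_3)
  have ne_2_9 : (lift0 β α ⊓ lift1 β α) ≠ (lift0 β β) := fun he => F_9_0 (by rw [← he]; exact T_2_0)
  have ne_2_10 : (lift0 β α ⊓ lift1 β α) ≠ (lift0 β δ) := fun he => F_2_2 (by rw [he]; exact T_10_2)
  have ne_3_4 : (ker0 β) ≠ (ker1 β) := fun he => F_4_2 (by rw [← he]; exact T_3_2)
  have ne_3_5 : (ker0 β) ≠ (lift0 β γ) := fun he => F_3_0 (by rw [he]; exact T_5_0)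
  have ne_3_6 : (ker0 β) ≠ (lift1 β γ) := fun he => F_3_0 (by rw [he]; exact T_6_0)
  have ne_3_7 : (ker0 β) ≠ (lift0 β α) := fun he => F_3_0 (by rw [he]; exact T_7_0)
  have ne_3_8 : (ker0 β) ≠ (lift1 β α) := fun he => F_3_0 (by rw [he]; exact T_8_0)
  have ne_3_9 : (ker0 β) ≠ (lift0 β β) := fun he => F_3_3 (by rw [he]; exact T_9_3)
  have ne_3_10 : (ker0 β) ≠ (lift0 β δ) := fun he => F_3_0 (by rw [he]; exact T_10_0)
  have ne_4_5 : (ker1 β) ≠ (lift0 β γ) := fun he => F_4_0 (by rw [he]; exact T_5_0)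
  have ne_4_6 : (ker1 β) ≠ (lift1 β γ) := fun he => F_4_0 (by rw [he]; exact T_6_0)
  have ne_4_7 : (ker1 β) ≠ (lift0 β α) := fun he => F_4_0 (by rw [he]; exact T_7_0)
  have ne_4_8 : (ker1 β) ≠ (lift1 β α) := fun he => F_4_0 (by rw [he]; exact T_8_0)
  have ne_4_9 : (ker1 β) ≠ (lift0 β β) := fun he => F_4_2 (by rw [he]; exact T_9_2)
  have ne_4_10 : (ker1 β) ≠ (lift0 β δ) := fun he => F_4_0 (by rw [he]; exact T_10_0)
  have ne_5_6 : (lift0 β γ) ≠ (lift1 β γ) := fun he => F_6_2 (by rw [← he]; exact T_5_2)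
  have ne_5_7 : (lift0 β γ) ≠ (lift0 β α) := fun he => F_5_1 (by rw [he]; exact T_7_1)
  have ne_5_8 : (lift0 β γ) ≠ (lift1 β α) := fun he => F_5_1 (by rw [he]; exact T_8_1)
  have ne_5_9 : (lift0 β γ) ≠ (lift0 β β) := fun he => F_9_0 (by rw [← he]; exact T_5_0)
  have ne_5_10 : (lift0 β γ) ≠ (lift0 β δ) := fun he => F_5_1 (by rw [he]; exact T_10_1)
  have ne_6_7 : (lift1 β γ) ≠ (lift0 β α) := fun he => F_6_1 (by rw [he]; exact T_7_1)
  have ne_6_8 : (lift1 β γ) ≠ (lift1 β α) := fun he => F_6_1 (by rw [he]; exact T_8_1)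
  have ne_6_9 : (lift1 β γ) ≠ (lift0 β β) := fun he => F_9_0 (by rw [← he]; exact T_6_0)
  have ne_6_10 : (lift1 β γ) ≠ (lift0 β δ) := fun he => F_6_1 (by rw [he]; exact T_10_1)
  have ne_7_8 : (lift0 β α) ≠ (lift1 β α) := fun he => F_8_2 (by rw [← he]; exact T_7_2)
  have ne_7_9 : (lift0 β α) ≠ (lift0 β β) := fun he => F_9_0 (by rw [← he]; exact T_7_0)
  have ne_7_10 : (lift0 β α) ≠ (lift0 β δ) := fun he => F_7_3 (by rw [he]; exact T_10_3)
  have ne_8_9 : (lift1 β α) ≠ (lift0 β β) := fun he => F_9_0 (by rw [← he]; exact T_8_0)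
  have ne_8_10 : (lift1 β α) ≠ (lift0 β δ) := fun he => F_8_2 (by rw [he]; exact T_10_2)
  have ne_9_10 : (lift0 β β) ≠ (lift0 β δ) := fun he => F_9_0 (by rw [he]; exact T_10_0)
  have hpw : List.Pairwise (fun (x y : Setoid (Dup β)) => x ≠ y) [(⊥ : Setoid (Dup β)), (lift0 β γ ⊓ lift1 β γ), (lift0 β α ⊓ lift1 β α), ker0 β, ker1 β, lift0 β γ, lift1 β γ, lift0 β α, lift1 β α, lift0 β β, lift0 β δ] := by
    refine List.Pairwise.cons ?_ (List.Pairwise.cons ?_ (List.Pairwise.cons ?_ (List.Pairwise.cons ?_ (List.Pairwise.cons ?_ (List.Pairwise.cons ?_ (List.Pairwise.cons ?_ (List.Pairwise.cons ?_ (List.Pairwise.cons ?_ (List.Pairwise.cons ?_ (List.Pairwise.cons ?_ List.Pairwise.nil))))))))))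
    · intro a ha
      simp only [List.mem_cons, List.mem_singleton, List.not_mem_nil, or_false] at ha
      rcases ha with rfl | rfl | rfl | rfl | rfl | rfl | rfl | rfl | rfl | rfl
      · exact ne_0_1
      · exact ne_0_2
      · exact ne_0_3
      · exact ne_0_4
      · exact ne_0_5
      · exact ne_0_6
      · exact ne_0_7
      · exact ne_0_8
      · exact ne_0_9
      · exact ne_0_10
    · intro a ha
      simp only [List.mem_cons, List.mem_singleton, List.not_mem_nil, or_false] at ha
      rcases ha with rfl | rfl | rfl | rfl | rfl | rfl | rfl | rfl | rfl
      · exact ne_1_2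
      · exact ne_1_3
      · exact ne_1_4
      · exact ne_1_5
      · exact ne_1_6
      · exact ne_1_7
      · exact ne_1_8
      · exact ne_1_9
      · exact ne_1_10
    · intro a ha
      simp only [List.mem_cons, List.mem_singleton, List.not_mem_nil, or_false] at ha
      rcases ha with rfl | rfl | rfl | rfl | rfl | rfl | rfl | rfl
      · exact ne_2_3
      · exact ne_2_4
      · exact ne_2_5
      · exact ne_2_6
      · exact ne_2_7
      · exact ne_2_8
      · exact ne_2_9
      · exact ne_2_10
    · intro a ha
      simp only [List.mem_cons, List.mem_singleton, List.not_mem_nil, or_false] at ha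
      rcases ha with rfl | rfl | rfl | rfl | rfl | rfl | rfl
      · exact ne_3_4
      · exact ne_3_5
      · exact ne_3_6
      · exact ne_3_7
      · exact ne_3_8
      · exact ne_3_9
      · exact ne_3_10
    · intro a ha
      simp only [List.mem_cons, List.mem_singleton, List.not_mem_nil, or_false] at ha
      rcases ha with rfl | rfl | rfl | rfl | rfl | rfl
      · exact ne_4_5
      · exact ne_4_6
      · exact ne_4_7
      · exact ne_4_8
      · exact ne_4_9
      · exact ne_4_10
    · intro a ha
      simp only [List.mem_cons, List.mem_singleton, List.not_mem_nil, or_false] at ha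
      rcases ha with rfl | rfl | rfl | rfl | rfl
      · exact ne_5_6
      · exact ne_5_7
      · exact ne_5_8
      · exact ne_5_9
      · exact ne_5_10
    · intro a ha
      simp only [List.mem_cons, List.mem_singleton, List.not_mem_nil, or_false] at ha
      rcases ha with rfl | rfl | rfl | rfl
      · exact ne_6_7
      · exact ne_6_8
      · exact ne_6_9
      · exact ne_6_10
    · intro a ha
      simp only [List.mem_cons, List.mem_singleton, List.not_mem_nil, or_false] at ha
      rcases ha with rfl | rfl | rfl
      · exact ne_7_8
      · exact ne_7_9
      · exact ne_7_10
    · intro a ha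
      simp only [List.mem_cons, List.mem_singleton, List.not_mem_nil, or_false] at ha
      rcases ha with rfl | rfl
      · exact ne_8_9
      · exact ne_8_10
    · intro a ha
      simp only [List.mem_cons, List.mem_singleton, List.not_mem_nil, or_false] at ha
      rcases ha with rfl
      · exact ne_9_10
    · intro a ha; exact absurd ha List.not_mem_nil
  have mem_0 : (⊥ : Setoid (Dup β)) ∈ ({(⊥ : Setoid (Dup β)), (lift0 β γ ⊓ lift1 β γ), (lift0 β α ⊓ lift1 β α), ker0 β, ker1 β, lift0 β γ, lift1 β γ, lift0 β α, lift1 β α, lift0 β β, lift0 β δ} : Set (Setoid (Dup β))) := Set.mem_insert _ _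
  have mem_1 : (lift0 β γ ⊓ lift1 β γ) ∈ ({(⊥ : Setoid (Dup β)), (lift0 β γ ⊓ lift1 β γ), (lift0 β α ⊓ lift1 β α), ker0 β, ker1 β, lift0 β γ, lift1 β γ, lift0 β α, lift1 β α, lift0 β β, lift0 β δ} : Set (Setoid (Dup β))) := Set.mem_insert_of_mem _ (Set.mem_insert _ _)
  have mem_2 : (lift0 β α ⊓ lift1 β α) ∈ ({(⊥ : Setoid (Dup β)), (lift0 β γ ⊓ lift1 β γ), (lift0 β α ⊓ lift1 β α), ker0 β, ker1 β, lift0 β γ, lift1 β γ, lift0 β α, lift1 β α, lift0 β β, lift0 β δ} : Set (Setoid (Dup β))) := Set.mem_insert_of_mem _ (Set.mem_insert_of_mem _ (Set.mem_insert _ _))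
  have mem_3 : (ker0 β) ∈ ({(⊥ : Setoid (Dup β)), (lift0 β γ ⊓ lift1 β γ), (lift0 β α ⊓ lift1 β α), ker0 β, ker1 β, lift0 β γ, lift1 β γ, lift0 β α, lift1 β α, lift0 β β, lift0 β δ} : Set (Setoid (Dup β))) := Set.mem_insert_of_mem _ (Set.mem_insert_of_mem _ (Set.mem_insert_of_mem _ (Set.mem_insert _ _)))
  have mem_4 : (ker1 β) ∈ ({(⊥ : Setoid (Dup β)), (lift0 β γ ⊓ lift1 β γ), (lift0 β α ⊓ lift1 β α), ker0 β, ker1 β, lift0 β γ, lift1 β γ, lift0 β α, lift1 β α, lift0 β β, lift0 β δ} : Set (Setoid (Dup β))) := Set.mem_insert_of_mem _ (Set.mem_insert_of_mem _ (Set.mem_insert_of_mem _ (Set.mem_insert_of_mem _ (Set.mem_insert _ _))))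
  have mem_5 : (lift0 β γ) ∈ ({(⊥ : Setoid (Dup β)), (lift0 β γ ⊓ lift1 β γ), (lift0 β α ⊓ lift1 β α), ker0 β, ker1 β, lift0 β γ, lift1 β γ, lift0 β α, lift1 β α, lift0 β β, lift0 β δ} : Set (Setoid (Dup β))) := Set.mem_insert_of_mem _ (Set.mem_insert_of_mem _ (Set.mem_insert_of_mem _ (Set.mem_insert_of_mem _ (Set.mem_insert_of_mem _ (Set.mem_insert _ _)))))
  have mem_6 : (lift1 β γ) ∈ ({(⊥ : Setoid (Dup β)), (lift0 β γ ⊓ lift1 β γ), (lift0 β α ⊓ lift1 β α), ker0 β, ker1 β, lift0 β γ, lift1 β γ, lift0 β α, lift1 β α, lift0 β β, lift0 β δ} : Set (Setoid (Dup β))) := Set.mem_insert_of_mem _ (Set.mem_insert_of_mem _ (Set.mem_insert_of_mem _ (Set.mem_insert_of_mem _ (Set.mem_insert_of_mem _ (Set.mem_insert_of_mem _ (Set.mem_insert _ _))))))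
  have mem_7 : (lift0 β α) ∈ ({(⊥ : Setoid (Dup β)), (lift0 β γ ⊓ lift1 β γ), (lift0 β α ⊓ lift1 β α), ker0 β, ker1 β, lift0 β γ, lift1 β γ, lift0 β α, lift1 β α, lift0 β β, lift0 β δ} : Set (Setoid (Dup β))) := Set.mem_insert_of_mem _ (Set.mem_insert_of_mem _ (Set.mem_insert_of_mem _ (Set.mem_insert_of_mem _ (Set.mem_insert_of_mem _ (Set.mem_insert_of_mem _ (Set.mem_insert_of_mem _ (Set.mem_insert _ _)))))))
  have mem_8 : (lift1 β α) ∈ ({(⊥ : Setoid (Dup β)), (lift0 β γ ⊓ lift1 β γ), (lift0 β α ⊓ lift1 β α), ker0 β, ker1 β, lift0 β γ, lift1 β γ, lift0 β α, lift1 β α, lift0 β β, lift0 β δ} : Set (Setoid (Dup β))) := Set.mem_insert_of_mem _ (Set.mem_insert_of_mem _ (Set.mem_insert_of_mem _ (Set.mem_insert_of_mem _ (Set.mem_insert_of_mem _ (Set.mem_insert_of_mem _ (Set.mem_insert_of_mem _ (Set.mem_insert_of_mem _ (Set.mem_insert _ _))))))))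
  have mem_9 : (lift0 β β) ∈ ({(⊥ : Setoid (Dup β)), (lift0 β γ ⊓ lift1 β γ), (lift0 β α ⊓ lift1 β α), ker0 β, ker1 β, lift0 β γ, lift1 β γ, lift0 β α, lift1 β α, lift0 β β, lift0 β δ} : Set (Setoid (Dup β))) := Set.mem_insert_of_mem _ (Set.mem_insert_of_mem _ (Set.mem_insert_of_mem _ (Set.mem_insert_of_mem _ (Set.mem_insert_of_mem _ (Set.mem_insert_of_mem _ (Set.mem_insert_of_mem _ (Set.mem_insert_of_mem _ (Set.mem_insert_of_mem _ (Set.mem_insert _ _)))))))))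
  have mem_10 : (lift0 β δ) ∈ ({(⊥ : Setoid (Dup β)), (lift0 β γ ⊓ lift1 β γ), (lift0 β α ⊓ lift1 β α), ker0 β, ker1 β, lift0 β γ, lift1 β γ, lift0 β α, lift1 β α, lift0 β β, lift0 β δ} : Set (Setoid (Dup β))) := Set.mem_insert_of_mem _ (Set.mem_insert_of_mem _ (Set.mem_insert_of_mem _ (Set.mem_insert_of_mem _ (Set.mem_insert_of_mem _ (Set.mem_insert_of_mem _ (Set.mem_insert_of_mem _ (Set.mem_insert_of_mem _ (Set.mem_insert_of_mem _ (Set.mem_insert_of_mem _ (Set.mem_singleton _))))))))))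
  have st5 : lift0 β γ ⊔ (lift0 β α ⊓ lift1 β α) = lift0 β α := (sup_comm _ _).trans jeq_2_5
  have st6 : lift1 β γ ⊔ (lift0 β α ⊓ lift1 β α) = lift1 β α := (sup_comm _ _).trans jeq_2_6
  have st7 : lift0 β β ⊓ (lift0 β α ⊓ lift1 β α) = ⊥ := (inf_comm _ _).trans meq_2_9
  have st9 : lift0 β γ ⊔ ker1 β = lift0 β δ := (sup_comm _ _).trans jeq_4_5
  have st10 : lift1 β γ ⊔ ker0 β = lift0 β δ := (sup_comm _ _).trans jeq_3_6
  have st11 : lift0 β β ⊔ (lift0 β γ ⊓ lift1 β γ) = lift0 β δ := (sup_comm _ _).trans jeq_1_9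
  refine ⟨hpw, ?_, lb01, ld01, hkey.1.trans hkey.2.symm, hkey.2, st5, st6, st7, zA0E1, st9, st10, st11⟩
  intro x hx y hy
  simp only [Set.mem_insert_iff, Set.mem_singleton_iff] at hx hy
  rcases hx with rfl | rfl | rfl | rfl | rfl | rfl | rfl | rfl | rfl | rfl | rfl <;>
      rcases hy with rfl | rfl | rfl | rfl | rfl | rfl | rfl | rfl | rfl | rfl | rfl
  · exact ⟨by rw [inf_idem]; exact mem_0, by rw [sup_idem]; exact mem_0⟩
  · exact ⟨by rw [bot_inf_eq]; exact mem_0, by rw [bot_sup_eq]; exact mem_1⟩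
  · exact ⟨by rw [bot_inf_eq]; exact mem_0, by rw [bot_sup_eq]; exact mem_2⟩
  · exact ⟨by rw [bot_inf_eq]; exact mem_0, by rw [bot_sup_eq]; exact mem_3⟩
  · exact ⟨by rw [bot_inf_eq]; exact mem_0, by rw [bot_sup_eq]; exact mem_4⟩
  · exact ⟨by rw [bot_inf_eq]; exact mem_0, by rw [bot_sup_eq]; exact mem_5⟩
  · exact ⟨by rw [bot_inf_eq]; exact mem_0, by rw [bot_sup_eq]; exact mem_6⟩
  · exact ⟨by rw [bot_inf_eq]; exact mem_0, by rw [bot_sup_eq]; exact mem_7⟩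
  · exact ⟨by rw [bot_inf_eq]; exact mem_0, by rw [bot_sup_eq]; exact mem_8⟩
  · exact ⟨by rw [bot_inf_eq]; exact mem_0, by rw [bot_sup_eq]; exact mem_9⟩
  · exact ⟨by rw [bot_inf_eq]; exact mem_0, by rw [bot_sup_eq]; exact mem_10⟩
  · exact ⟨by rw [inf_bot_eq]; exact mem_0, by rw [sup_bot_eq]; exact mem_1⟩
  · exact ⟨by rw [inf_idem]; exact mem_1, by rw [sup_idem]; exact mem_1⟩
  · exact ⟨by rw [meq_1_2]; exact mem_1, by rw [jeq_1_2]; exact mem_2⟩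
  · exact ⟨by rw [meq_1_3]; exact mem_0, by rw [jeq_1_3]; exact mem_5⟩
  · exact ⟨by rw [meq_1_4]; exact mem_0, by rw [jeq_1_4]; exact mem_6⟩
  · exact ⟨by rw [meq_1_5]; exact mem_1, by rw [jeq_1_5]; exact mem_5⟩
  · exact ⟨by rw [meq_1_6]; exact mem_1, by rw [jeq_1_6]; exact mem_6⟩
  · exact ⟨by rw [meq_1_7]; exact mem_1, by rw [jeq_1_7]; exact mem_7⟩
  · exact ⟨by rw [meq_1_8]; exact mem_1, by rw [jeq_1_8]; exact mem_8⟩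
  · exact ⟨by rw [meq_1_9]; exact mem_0, by rw [jeq_1_9]; exact mem_10⟩
  · exact ⟨by rw [meq_1_10]; exact mem_1, by rw [jeq_1_10]; exact mem_10⟩
  · exact ⟨by rw [inf_bot_eq]; exact mem_0, by rw [sup_bot_eq]; exact mem_2⟩
  · exact ⟨by rw [inf_comm (lift0 β α ⊓ lift1 β α) (lift0 β γ ⊓ lift1 β γ), meq_1_2]; exact mem_1, by rw [sup_comm (lift0 β α ⊓ lift1 β α) (lift0 β γ ⊓ lift1 β γ), jeq_1_2]; exact mem_2⟩
  · exact ⟨by rw [inf_idem]; exact mem_2, by rw [sup_idem]; exact mem_2⟩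
  · exact ⟨by rw [meq_2_3]; exact mem_0, by rw [jeq_2_3]; exact mem_7⟩
  · exact ⟨by rw [meq_2_4]; exact mem_0, by rw [jeq_2_4]; exact mem_8⟩
  · exact ⟨by rw [meq_2_5]; exact mem_1, by rw [jeq_2_5]; exact mem_7⟩
  · exact ⟨by rw [meq_2_6]; exact mem_1, by rw [jeq_2_6]; exact mem_8⟩
  · exact ⟨by rw [meq_2_7]; exact mem_2, by rw [jeq_2_7]; exact mem_7⟩
  · exact ⟨by rw [meq_2_8]; exact mem_2, by rw [jeq_2_8]; exact mem_8⟩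
  · exact ⟨by rw [meq_2_9]; exact mem_0, by rw [jeq_2_9]; exact mem_10⟩
  · exact ⟨by rw [meq_2_10]; exact mem_2, by rw [jeq_2_10]; exact mem_10⟩
  · exact ⟨by rw [inf_bot_eq]; exact mem_0, by rw [sup_bot_eq]; exact mem_3⟩
  · exact ⟨by rw [inf_comm (ker0 β) (lift0 β γ ⊓ lift1 β γ), meq_1_3]; exact mem_0, by rw [sup_comm (ker0 β) (lift0 β γ ⊓ lift1 β γ), jeq_1_3]; exact mem_5⟩
  · exact ⟨by rw [inf_comm (ker0 β) (lift0 β α ⊓ lift1 β α), meq_2_3]; exact mem_0, by rw [sup_comm (ker0 β) (lift0 β α ⊓ lift1 β α), jeq_2_3]; exact mem_7⟩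
  · exact ⟨by rw [inf_idem]; exact mem_3, by rw [sup_idem]; exact mem_3⟩
  · exact ⟨by rw [meq_3_4]; exact mem_0, by rw [jeq_3_4]; exact mem_9⟩
  · exact ⟨by rw [meq_3_5]; exact mem_3, by rw [jeq_3_5]; exact mem_5⟩
  · exact ⟨by rw [meq_3_6]; exact mem_0, by rw [jeq_3_6]; exact mem_10⟩
  · exact ⟨by rw [meq_3_7]; exact mem_3, by rw [jeq_3_7]; exact mem_7⟩
  · exact ⟨by rw [meq_3_8]; exact mem_0, by rw [jeq_3_8]; exact mem_10⟩
  · exact ⟨by rw [meq_3_9]; exact mem_3, by rw [jeq_3_9]; exact mem_9⟩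
  · exact ⟨by rw [meq_3_10]; exact mem_3, by rw [jeq_3_10]; exact mem_10⟩
  · exact ⟨by rw [inf_bot_eq]; exact mem_0, by rw [sup_bot_eq]; exact mem_4⟩
  · exact ⟨by rw [inf_comm (ker1 β) (lift0 β γ ⊓ lift1 β γ), meq_1_4]; exact mem_0, by rw [sup_comm (ker1 β) (lift0 β γ ⊓ lift1 β γ), jeq_1_4]; exact mem_6⟩
  · exact ⟨by rw [inf_comm (ker1 β) (lift0 β α ⊓ lift1 β α), meq_2_4]; exact mem_0, by rw [sup_comm (ker1 β) (lift0 β α ⊓ lift1 β α), jeq_2_4]; exact mem_8⟩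
  · exact ⟨by rw [inf_comm (ker1 β) (ker0 β), meq_3_4]; exact mem_0, by rw [sup_comm (ker1 β) (ker0 β), jeq_3_4]; exact mem_9⟩
  · exact ⟨by rw [inf_idem]; exact mem_4, by rw [sup_idem]; exact mem_4⟩
  · exact ⟨by rw [meq_4_5]; exact mem_0, by rw [jeq_4_5]; exact mem_10⟩
  · exact ⟨by rw [meq_4_6]; exact mem_4, by rw [jeq_4_6]; exact mem_6⟩
  · exact ⟨by rw [meq_4_7]; exact mem_0, by rw [jeq_4_7]; exact mem_10⟩
  · exact ⟨by rw [meq_4_8]; exact mem_4, by rw [jeq_4_8]; exact mem_8⟩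
  · exact ⟨by rw [meq_4_9]; exact mem_4, by rw [jeq_4_9]; exact mem_9⟩
  · exact ⟨by rw [meq_4_10]; exact mem_4, by rw [jeq_4_10]; exact mem_10⟩
  · exact ⟨by rw [inf_bot_eq]; exact mem_0, by rw [sup_bot_eq]; exact mem_5⟩
  · exact ⟨by rw [inf_comm (lift0 β γ) (lift0 β γ ⊓ lift1 β γ), meq_1_5]; exact mem_1, by rw [sup_comm (lift0 β γ) (lift0 β γ ⊓ lift1 β γ), jeq_1_5]; exact mem_5⟩
  · exact ⟨by rw [inf_comm (lift0 β γ) (lift0 β α ⊓ lift1 β α), meq_2_5]; exact mem_1, by rw [sup_comm (lift0 β γ) (lift0 β α ⊓ lift1 β α), jeq_2_5]; exact mem_7⟩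
  · exact ⟨by rw [inf_comm (lift0 β γ) (ker0 β), meq_3_5]; exact mem_3, by rw [sup_comm (lift0 β γ) (ker0 β), jeq_3_5]; exact mem_5⟩
  · exact ⟨by rw [inf_comm (lift0 β γ) (ker1 β), meq_4_5]; exact mem_0, by rw [sup_comm (lift0 β γ) (ker1 β), jeq_4_5]; exact mem_10⟩
  · exact ⟨by rw [inf_idem]; exact mem_5, by rw [sup_idem]; exact mem_5⟩
  · exact ⟨by rw [meq_5_6]; exact mem_1, by rw [jeq_5_6]; exact mem_10⟩
  · exact ⟨by rw [meq_5_7]; exact mem_5, by rw [jeq_5_7]; exact mem_7⟩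
  · exact ⟨by rw [meq_5_8]; exact mem_1, by rw [jeq_5_8]; exact mem_10⟩
  · exact ⟨by rw [meq_5_9]; exact mem_3, by rw [jeq_5_9]; exact mem_10⟩
  · exact ⟨by rw [meq_5_10]; exact mem_5, by rw [jeq_5_10]; exact mem_10⟩
  · exact ⟨by rw [inf_bot_eq]; exact mem_0, by rw [sup_bot_eq]; exact mem_6⟩
  · exact ⟨by rw [inf_comm (lift1 β γ) (lift0 β γ ⊓ lift1 β γ), meq_1_6]; exact mem_1, by rw [sup_comm (lift1 β γ) (lift0 β γ ⊓ lift1 β γ), jeq_1_6]; exact mem_6⟩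
  · exact ⟨by rw [inf_comm (lift1 β γ) (lift0 β α ⊓ lift1 β α), meq_2_6]; exact mem_1, by rw [sup_comm (lift1 β γ) (lift0 β α ⊓ lift1 β α), jeq_2_6]; exact mem_8⟩
  · exact ⟨by rw [inf_comm (lift1 β γ) (ker0 β), meq_3_6]; exact mem_0, by rw [sup_comm (lift1 β γ) (ker0 β), jeq_3_6]; exact mem_10⟩
  · exact ⟨by rw [inf_comm (lift1 β γ) (ker1 β), meq_4_6]; exact mem_4, by rw [sup_comm (lift1 β γ) (ker1 β), jeq_4_6]; exact mem_6⟩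
  · exact ⟨by rw [inf_comm (lift1 β γ) (lift0 β γ), meq_5_6]; exact mem_1, by rw [sup_comm (lift1 β γ) (lift0 β γ), jeq_5_6]; exact mem_10⟩
  · exact ⟨by rw [inf_idem]; exact mem_6, by rw [sup_idem]; exact mem_6⟩
  · exact ⟨by rw [meq_6_7]; exact mem_1, by rw [jeq_6_7]; exact mem_10⟩
  · exact ⟨by rw [meq_6_8]; exact mem_6, by rw [jeq_6_8]; exact mem_8⟩
  · exact ⟨by rw [meq_6_9]; exact mem_4, by rw [jeq_6_9]; exact mem_10⟩
  · exact ⟨by rw [meq_6_10]; exact mem_6, by rw [jeq_6_10]; exact mem_10⟩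
  · exact ⟨by rw [inf_bot_eq]; exact mem_0, by rw [sup_bot_eq]; exact mem_7⟩
  · exact ⟨by rw [inf_comm (lift0 β α) (lift0 β γ ⊓ lift1 β γ), meq_1_7]; exact mem_1, by rw [sup_comm (lift0 β α) (lift0 β γ ⊓ lift1 β γ), jeq_1_7]; exact mem_7⟩
  · exact ⟨by rw [inf_comm (lift0 β α) (lift0 β α ⊓ lift1 β α), meq_2_7]; exact mem_2, by rw [sup_comm (lift0 β α) (lift0 β α ⊓ lift1 β α), jeq_2_7]; exact mem_7⟩
  · exact ⟨by rw [inf_comm (lift0 β α) (ker0 β), meq_3_7]; exact mem_3, by rw [sup_comm (lift0 β α) (ker0 β), jeq_3_7]; exact mem_7⟩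
  · exact ⟨by rw [inf_comm (lift0 β α) (ker1 β), meq_4_7]; exact mem_0, by rw [sup_comm (lift0 β α) (ker1 β), jeq_4_7]; exact mem_10⟩
  · exact ⟨by rw [inf_comm (lift0 β α) (lift0 β γ), meq_5_7]; exact mem_5, by rw [sup_comm (lift0 β α) (lift0 β γ), jeq_5_7]; exact mem_7⟩
  · exact ⟨by rw [inf_comm (lift0 β α) (lift1 β γ), meq_6_7]; exact mem_1, by rw [sup_comm (lift0 β α) (lift1 β γ), jeq_6_7]; exact mem_10⟩
  · exact ⟨by rw [inf_idem]; exact mem_7, by rw [sup_idem]; exact mem_7⟩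
  · exact ⟨by rw [meq_7_8]; exact mem_2, by rw [jeq_7_8]; exact mem_10⟩
  · exact ⟨by rw [meq_7_9]; exact mem_3, by rw [jeq_7_9]; exact mem_10⟩
  · exact ⟨by rw [meq_7_10]; exact mem_7, by rw [jeq_7_10]; exact mem_10⟩
  · exact ⟨by rw [inf_bot_eq]; exact mem_0, by rw [sup_bot_eq]; exact mem_8⟩
  · exact ⟨by rw [inf_comm (lift1 β α) (lift0 β γ ⊓ lift1 β γ), meq_1_8]; exact mem_1, by rw [sup_comm (lift1 β α) (lift0 β γ ⊓ lift1 β γ), jeq_1_8]; exact mem_8⟩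
  · exact ⟨by rw [inf_comm (lift1 β α) (lift0 β α ⊓ lift1 β α), meq_2_8]; exact mem_2, by rw [sup_comm (lift1 β α) (lift0 β α ⊓ lift1 β α), jeq_2_8]; exact mem_8⟩
  · exact ⟨by rw [inf_comm (lift1 β α) (ker0 β), meq_3_8]; exact mem_0, by rw [sup_comm (lift1 β α) (ker0 β), jeq_3_8]; exact mem_10⟩
  · exact ⟨by rw [inf_comm (lift1 β α) (ker1 β), meq_4_8]; exact mem_4, by rw [sup_comm (lift1 β α) (ker1 β), jeq_4_8]; exact mem_8⟩
  · exact ⟨by rw [inf_comm (lift1 β α) (lift0 β γ), meq_5_8]; exact mem_1, by rw [sup_comm (lift1 β α) (lift0 β γ), jeq_5_8]; exact mem_10⟩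
  · exact ⟨by rw [inf_comm (lift1 β α) (lift1 β γ), meq_6_8]; exact mem_6, by rw [sup_comm (lift1 β α) (lift1 β γ), jeq_6_8]; exact mem_8⟩
  · exact ⟨by rw [inf_comm (lift1 β α) (lift0 β α), meq_7_8]; exact mem_2, by rw [sup_comm (lift1 β α) (lift0 β α), jeq_7_8]; exact mem_10⟩
  · exact ⟨by rw [inf_idem]; exact mem_8, by rw [sup_idem]; exact mem_8⟩
  · exact ⟨by rw [meq_8_9]; exact mem_4, by rw [jeq_8_9]; exact mem_10⟩
  · exact ⟨by rw [meq_8_10]; exact mem_8, by rw [jeq_8_10]; exact mem_10⟩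
  · exact ⟨by rw [inf_bot_eq]; exact mem_0, by rw [sup_bot_eq]; exact mem_9⟩
  · exact ⟨by rw [inf_comm (lift0 β β) (lift0 β γ ⊓ lift1 β γ), meq_1_9]; exact mem_0, by rw [sup_comm (lift0 β β) (lift0 β γ ⊓ lift1 β γ), jeq_1_9]; exact mem_10⟩
  · exact ⟨by rw [inf_comm (lift0 β β) (lift0 β α ⊓ lift1 β α), meq_2_9]; exact mem_0, by rw [sup_comm (lift0 β β) (lift0 β α ⊓ lift1 β α), jeq_2_9]; exact mem_10⟩
  · exact ⟨by rw [inf_comm (lift0 β β) (ker0 β), meq_3_9]; exact mem_3, by rw [sup_comm (lift0 β β) (ker0 β), jeq_3_9]; exact mem_9⟩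
  · exact ⟨by rw [inf_comm (lift0 β β) (ker1 β), meq_4_9]; exact mem_4, by rw [sup_comm (lift0 β β) (ker1 β), jeq_4_9]; exact mem_9⟩
  · exact ⟨by rw [inf_comm (lift0 β β) (lift0 β γ), meq_5_9]; exact mem_3, by rw [sup_comm (lift0 β β) (lift0 β γ), jeq_5_9]; exact mem_10⟩
  · exact ⟨by rw [inf_comm (lift0 β β) (lift1 β γ), meq_6_9]; exact mem_4, by rw [sup_comm (lift0 β β) (lift1 β γ), jeq_6_9]; exact mem_10⟩
  · exact ⟨by rw [inf_comm (lift0 β β) (lift0 β α), meq_7_9]; exact mem_3, by rw [sup_comm (lift0 β β) (lift0 β α), jeq_7_9]; exact mem_10⟩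
  · exact ⟨by rw [inf_comm (lift0 β β) (lift1 β α), meq_8_9]; exact mem_4, by rw [sup_comm (lift0 β β) (lift1 β α), jeq_8_9]; exact mem_10⟩
  · exact ⟨by rw [inf_idem]; exact mem_9, by rw [sup_idem]; exact mem_9⟩
  · exact ⟨by rw [meq_9_10]; exact mem_9, by rw [jeq_9_10]; exact mem_10⟩
  · exact ⟨by rw [inf_bot_eq]; exact mem_0, by rw [sup_bot_eq]; exact mem_10⟩
  · exact ⟨by rw [inf_comm (lift0 β δ) (lift0 β γ ⊓ lift1 β γ), meq_1_10]; exact mem_1, by rw [sup_comm (lift0 β δ) (lift0 β γ ⊓ lift1 β γ), jeq_1_10]; exact mem_10⟩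
  · exact ⟨by rw [inf_comm (lift0 β δ) (lift0 β α ⊓ lift1 β α), meq_2_10]; exact mem_2, by rw [sup_comm (lift0 β δ) (lift0 β α ⊓ lift1 β α), jeq_2_10]; exact mem_10⟩
  · exact ⟨by rw [inf_comm (lift0 β δ) (ker0 β), meq_3_10]; exact mem_3, by rw [sup_comm (lift0 β δ) (ker0 β), jeq_3_10]; exact mem_10⟩
  · exact ⟨by rw [inf_comm (lift0 β δ) (ker1 β), meq_4_10]; exact mem_4, by rw [sup_comm (lift0 β δ) (ker1 β), jeq_4_10]; exact mem_10⟩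
  · exact ⟨by rw [inf_comm (lift0 β δ) (lift0 β γ), meq_5_10]; exact mem_5, by rw [sup_comm (lift0 β δ) (lift0 β γ), jeq_5_10]; exact mem_10⟩
  · exact ⟨by rw [inf_comm (lift0 β δ) (lift1 β γ), meq_6_10]; exact mem_6, by rw [sup_comm (lift0 β δ) (lift1 β γ), jeq_6_10]; exact mem_10⟩
  · exact ⟨by rw [inf_comm (lift0 β δ) (lift0 β α), meq_7_10]; exact mem_7, by rw [sup_comm (lift0 β δ) (lift0 β α), jeq_7_10]; exact mem_10⟩
  · exact ⟨by rw [inf_comm (lift0 β δ) (lift1 β α), meq_8_10]; exact mem_8, by rw [sup_comm (lift0 β δ) (lift1 β α), jeq_8_10]; exact mem_10⟩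
  · exact ⟨by rw [inf_comm (lift0 β δ) (lift0 β β), meq_9_10]; exact mem_9, by rw [sup_comm (lift0 β δ) (lift0 β β), jeq_9_10]; exact mem_10⟩
  · exact ⟨by rw [inf_idem]; exact mem_10, by rw [sup_idem]; exact mem_10⟩
end

section
/- Let A be a type and let α, β, γ, δ be setoids on A forming a pentagon N5. Then there exist setoids γ', α' on A with γ ≤ γ', α' ≤ α, such that γ' is covered by α' in Setoid A (γ' < α' and no setoid lies strictly between them) and α, β, γ', δ with α replaced by α' again form a pentagon N5, i.e. ⊥ < γ' < α' < δ, α' ⊓ β = ⊥ and γ' ⊔ β = α' ⊔ β = δ. -/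
/-! Common setup: the lattice `Setoid A` of equivalence relations on `A`,
the duplication `Dup β = {p : A × A // β p.1 p.2}`, the lifted setoids
`lift0 β θ = θ₀`, `lift1 β θ = θ₁`, the projection kernels `ker0 β = η₀`,
`ker1 β = η₁`, and relational composition `rc`. -/

variable {A : Type*}

/-- weak atomicity refinement of a pentagon. -/
theorem pentagon_with_cover (α β γ δ : Setoid A) (h : IsN5 α β γ δ) :
    ∃ γ' α' : Setoid A, γ ≤ γ' ∧ α' ≤ α ∧ γ' ⋖ α' ∧
      ⊥ < γ' ∧ γ' < α' ∧ α' < δ ∧ α' ⊓ β = ⊥ ∧ γ' ⊔ β = δ ∧ α' ⊔ β = δ := by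
  obtain ⟨hbg, hga, had, hab, hgb, hab', _, _⟩ := h
  -- pick a pair related by α but not γ
  have hnle : ¬ α ≤ γ := hga.not_ge
  rw [Setoid.le_def] at hnle
  push_neg at hnle
  obtain ⟨a, b, hab0, hnab⟩ := hnle
  -- the set of setoids between γ and α not relating a and b
  set S : Set (Setoid A) := {θ | γ ≤ θ ∧ θ ≤ α ∧ ¬ θ a b} with hS
  have hγS : γ ∈ S := ⟨le_refl _, hga.le, hnab⟩
  obtain ⟨γ', hγγ', hmax⟩ := zorn_le_nonempty₀ S (fun c hcS hchain y hyc => by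
    refine ⟨⟨fun x z => ∃ θ ∈ c, θ.r x z, ?_, ?_, ?_⟩, ⟨?_, ?_, ?_⟩, ?_⟩
    · exact fun x => ⟨y, hyc, y.refl' x⟩
    · rintro x z ⟨θ, hθ, hxz⟩; exact ⟨θ, hθ, θ.symm' hxz⟩
    · rintro x z w ⟨θ, hθ, hxz⟩ ⟨θ', hθ', hzw⟩
      rcases hchain.total hθ hθ' with hle | hle
      · exact ⟨θ', hθ', θ'.trans' (hle hxz) hzw⟩
      · exact ⟨θ, hθ, θ.trans' hxz (hle hzw)⟩
    · intro x z hxz; exact ⟨y, hyc, (hcS hyc).1 hxz⟩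
    · rintro x z ⟨θ, hθ, hxz⟩; exact (hcS hθ).2.1 hxz
    · rintro ⟨θ, hθ, hθab⟩; exact (hcS hθ).2.2 hθab
    · intro θ hθ x z hxz; exact ⟨θ, hθ, hxz⟩) γ hγS
  obtain ⟨⟨_, hγ'α, hγ'ab⟩, hmax⟩ := hmax
  -- α' : the smallest setoid above γ' relating a and b
  set α' : Setoid A := sInf {θ : Setoid A | γ' ≤ θ ∧ θ.r a b} with hα'
  have hα'mem : ∀ θ ∈ {θ : Setoid A | γ' ≤ θ ∧ θ.r a b}, α' ≤ θ :=
    fun θ hθ => sInf_le hθ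
  have hγ'α' : γ' ≤ α' := le_sInf fun θ hθ => hθ.1
  have hα'ab : α'.r a b := fun θ hθ => hθ.2
  have hα'α : α' ≤ α := sInf_le ⟨hγ'α, hab0⟩
  have hlt : γ' < α' := lt_of_le_of_ne hγ'α' (fun he => hγ'ab (he ▸ hα'ab))
  -- key: anything strictly above γ' and ≤ α is above α'
  have key : ∀ θ : Setoid A, γ' < θ → θ ≤ α → α' ≤ θ := by
    intro θ hθ hθα
    have hθab : θ.r a b := by
      by_contra hn
      exact hθ.ne (le_antisymm hθ.le (hmax ⟨hγγ'.trans hθ.le, hθα, hn⟩ hθ.le))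
        |>.elim
    exact hα'mem θ ⟨hθ.le, hθab⟩
  have hcov : γ' ⋖ α' := by
    refine ⟨hlt, fun θ hθ1 hθ2 => ?_⟩
    exact (key θ hθ1 (hθ2.le.trans hα'α)).not_gt hθ2
  have hγle : γ ≤ γ' := hγγ'
  have hβδ : β ≤ δ := le_trans le_sup_right hab'.le
  refine ⟨γ', α', hγle, hα'α, hcov, ?_, hlt, ?_, ?_, ?_, ?_⟩
  · exact lt_of_lt_of_le hbg hγle
  · exact lt_of_le_of_lt hα'α had
  · exact le_antisymm (le_trans (inf_le_inf_right β hα'α) hab.le) bot_le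
  · refine le_antisymm (sup_le (le_trans (hγ'α.trans had.le) le_rfl) hβδ) ?_
    calc δ = γ ⊔ β := hgb.symm
    _ ≤ γ' ⊔ β := sup_le_sup_right hγle β
  · refine le_antisymm (sup_le (hα'α.trans had.le) hβδ) ?_
    calc δ = γ ⊔ β := hgb.symm
    _ ≤ α' ⊔ β := sup_le_sup_right (hγle.trans hγ'α') β
end

section
/- Let A be a type and let α, β, γ, δ be setoids on A forming a pentagon N5. Form the duplication A(β) over β. Then α₀ ⊓ γ₁ and γ₀ ⊓ α₁ are comparable in Setoid (A(β)) if and only if (β∘γ∘β) ∩ α ⊆ γ, i.e. if and only if for all a, b in A, whenever α a b holds and there exist x, y with β a x, γ x y and β y b, then γ a b holds. -/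
/-! Common setup: the lattice `Setoid A` of equivalence relations on `A`,
the duplication `Dup β = {p : A × A // β p.1 p.2}`, the lifted setoids
`lift0 β θ = θ₀`, `lift1 β θ = θ₁`, the projection kernels `ker0 β = η₀`,
`ker1 β = η₁`, and relational composition `rc`. -/

variable {A : Type*}

/-- Theorem 1.2 criterion: comparability iff `(β∘γ∘β) ∩ α ⊆ γ`. -/
theorem comparable_iff_bgb (α β γ δ : Setoid A) (h : IsN5 α β γ δ) :
    (lift0 β α ⊓ lift1 β γ ≤ lift0 β γ ⊓ lift1 β α ∨
      lift0 β γ ⊓ lift1 β α ≤ lift0 β α ⊓ lift1 β γ) ↔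
    (∀ a b : A, α.r a b → (∃ x y : A, β.r a x ∧ γ.r x y ∧ β.r y b) →
      γ.r a b) := by
  constructor
  · rintro (hle | hle) a b hab ⟨x, y, hax, hxy, hyb⟩
    · exact (Setoid.le_def.mp hle (x := ⟨(a, x), hax⟩) (y := ⟨(b, y), β.symm' hyb⟩)
        ⟨hab, hxy⟩).1
    · exact (Setoid.le_def.mp hle (x := ⟨(x, a), β.symm' hax⟩) (y := ⟨(y, b), hyb⟩)
        ⟨hxy, hab⟩).2
  · intro hcond
    right
    refine Setoid.le_def.mpr ?_
    rintro ⟨⟨a, x⟩, hax⟩ ⟨⟨b, y⟩, hby⟩ ⟨hg, ha⟩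
    exact ⟨Setoid.le_def.mp h.2.1.le hg,
      hcond x y ha ⟨a, b, β.symm' hax, hg, hby⟩⟩
end

section
/- Let A be a type and let α, β, γ be setoids on A with γ ≤ α. Then there exists a pair in ((β∘γ∘β) ∩ α) \ γ if and only if there exists a pair in ((β∘γ∘β∘γ) ∩ α) \ γ or a pair in ((γ∘β∘γ∘β) ∩ α) \ γ. Equivalently: (β∘γ∘β) ∩ α ⊆ γ iff both (β∘γ∘β∘γ) ∩ α ⊆ γ and (γ∘β∘γ∘β) ∩ α ⊆ γ. -/
/-! Common setup: the lattice `Setoid A` of equivalence relations on `A`,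
the duplication `Dup β = {p : A × A // β p.1 p.2}`, the lifted setoids
`lift0 β θ = θ₀`, `lift1 β θ = θ₁`, the projection kernels `ker0 β = η₀`,
`ker1 β = η₁`, and relational composition `rc`. -/

variable {A : Type*}

/-- 3-fold versus 4-fold alternating products. -/
theorem bgb_iff_four (α β γ : Setoid A) (hγα : γ ≤ α) :
    ((∃ a b : A, rc β.r (rc γ.r β.r) a b ∧ α.r a b ∧ ¬ γ.r a b) ↔
      ((∃ a b : A, rc β.r (rc γ.r (rc β.r γ.r)) a b ∧ α.r a b ∧ ¬ γ.r a b) ∨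
       (∃ a b : A, rc γ.r (rc β.r (rc γ.r β.r)) a b ∧ α.r a b ∧ ¬ γ.r a b))) ∧
    ((∀ a b : A, rc β.r (rc γ.r β.r) a b → α.r a b → γ.r a b) ↔
      ((∀ a b : A, rc β.r (rc γ.r (rc β.r γ.r)) a b → α.r a b → γ.r a b) ∧
       (∀ a b : A, rc γ.r (rc β.r (rc γ.r β.r)) a b → α.r a b → γ.r a b))) := by

  constructor
  · constructor
    · rintro ⟨a, b, ⟨c, hac, d, hcd, hdb⟩, hab, hnab⟩
      left
      exact ⟨a, b, ⟨c, hac, d, hcd, b, hdb, γ.refl' b⟩, hab, hnab⟩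
    · rintro (⟨a, b, ⟨c, hac, d, hcd, e, hde, heb⟩, hab, hnab⟩ |
              ⟨a, b, ⟨c, hac, d, hcd, e, hde, heb⟩, hab, hnab⟩)
      · refine ⟨a, e, ⟨c, hac, d, hcd, hde⟩, ?_, ?_⟩
        · exact α.trans' hab (α.symm' (hγα heb))
        · intro h; exact hnab (γ.trans' h heb)
      · refine ⟨c, b, ⟨d, hcd, e, hde, heb⟩, ?_, ?_⟩
        · exact α.trans' (α.symm' (hγα hac)) hab
        · intro h; exact hnab (γ.trans' hac h)
  · constructor
    · intro H
      constructor
      · rintro a b ⟨c, hac, d, hcd, e, hde, heb⟩ hab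
        have hae : γ.r a e := H a e ⟨c, hac, d, hcd, hde⟩
          (α.trans' hab (α.symm' (hγα heb)))
        exact γ.trans' hae heb
      · rintro a b ⟨c, hac, d, hcd, e, hde, heb⟩ hab
        have hcb : γ.r c b := H c b ⟨d, hcd, e, hde, heb⟩
          (α.trans' (α.symm' (hγα hac)) hab)
        exact γ.trans' hac hcb
    · rintro ⟨H1, _⟩ a b ⟨c, hac, d, hcd, hdb⟩ hab
      exact H1 a b ⟨c, hac, d, hcd, b, hdb, γ.refl' b⟩ hab
end

section
/- Let A be a type and let α, β, γ, δ be setoids on A forming a diamond M3 with bottom ⊥. Form the duplication A(γ) over γ. Then the following are equivalent in Setoid (A(γ)): (1) α₀ ⊓ β₁ and β₀ ⊓ α₁ are comparable (one is ≤ the other); (2) α₀ ⊓ β₁ = β₀ ⊓ α₁ = ⊥. -/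
/-! Common setup: the lattice `Setoid A` of equivalence relations on `A`,
the duplication `Dup β = {p : A × A // β p.1 p.2}`, the lifted setoids
`lift0 β θ = θ₀`, `lift1 β θ = θ₁`, the projection kernels `ker0 β = η₀`,
`ker1 β = η₁`, and relational composition `rc`. -/

variable {A : Type*}

/-- `α, β, γ, δ` form a diamond `M₃` with bottom `⊥` in `Setoid A`. -/
def IsM3 (α β γ δ : Setoid A) : Prop :=
  α ⊓ β = ⊥ ∧ α ⊓ γ = ⊥ ∧ β ⊓ γ = ⊥ ∧
  α ⊔ β = δ ∧ α ⊔ γ = δ ∧ β ⊔ γ = δ ∧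
  α ≠ β ∧ α ≠ γ ∧ β ≠ γ ∧
  α ≠ ⊥ ∧ β ≠ ⊥ ∧ γ ≠ ⊥ ∧ α ≠ δ ∧ β ≠ δ ∧ γ ≠ δ

lemma key_nozero (α β γ : Setoid A) (hab : α ⊓ β = ⊥)
    (hle : lift0 γ α ⊓ lift1 γ β ≤ lift0 γ β ⊓ lift1 γ α) :
    lift0 γ α ⊓ lift1 γ β = ⊥ ∧ lift0 γ β ⊓ lift1 γ α = ⊥ := by
  have bot : ∀ a b : A, α.r a b → β.r a b → a = b := by
    intro a b h1 h2
    have : (α ⊓ β) a b := Setoid.inf_iff_and.mpr ⟨h1, h2⟩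
    rw [hab] at this
    exact this
  constructor
  · apply le_antisymm _ bot_le
    intro x y hxy
    obtain ⟨h1, h2⟩ := Setoid.inf_iff_and.mp hxy
    have h3 := Setoid.inf_iff_and.mp (hle hxy)
    show x = y
    apply Subtype.ext
    exact Prod.ext (bot _ _ h1 h3.1) (bot _ _ h3.2 h2)
  · apply le_antisymm _ bot_le
    intro x y hxy
    obtain ⟨h1, h2⟩ := Setoid.inf_iff_and.mp hxy
    have hxy' : (lift0 γ α ⊓ lift1 γ β) ⟨(x.1.2, x.1.1), γ.symm' x.2⟩
        ⟨(y.1.2, y.1.1), γ.symm' y.2⟩ := Setoid.inf_iff_and.mpr ⟨h2, h1⟩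
    have h3 := Setoid.inf_iff_and.mp (hle hxy')
    show x = y
    apply Subtype.ext
    exact Prod.ext (bot _ _ h3.2 h1) (bot _ _ h2 h3.1)

/-- Lemma 4.1. -/
theorem nozero (α β γ δ : Setoid A) (h : IsM3 α β γ δ) :
    (lift0 γ α ⊓ lift1 γ β ≤ lift0 γ β ⊓ lift1 γ α ∨
      lift0 γ β ⊓ lift1 γ α ≤ lift0 γ α ⊓ lift1 γ β) ↔
    (lift0 γ α ⊓ lift1 γ β = ⊥ ∧ lift0 γ β ⊓ lift1 γ α = ⊥) := by
  constructor
  · rintro (hle | hle)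
    · exact key_nozero α β γ h.1 hle
    · have := key_nozero β α γ (by rw [inf_comm]; exact h.1) hle
      exact ⟨this.2, this.1⟩
  · rintro ⟨h1, h2⟩
    left
    rw [h1, h2]
end

section
/- Let A be a type and let α, β, γ, δ be setoids on A forming a diamond M3 with bottom ⊥, and assume the 3-permutability condition γ ⊔ β = γ∘β∘γ. Form the duplication A(γ) over γ. Then α₀ ⊓ β₁ ≠ ⊥ in Setoid (A(γ)), and consequently α₀ ⊓ β₁ and β₀ ⊓ α₁ are incomparable (neither one is ≤ the other). -/
/-! Common setup: the lattice `Setoid A` of equivalence relations on `A`,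
the duplication `Dup β = {p : A × A // β p.1 p.2}`, the lifted setoids
`lift0 β θ = θ₀`, `lift1 β θ = θ₁`, the projection kernels `ker0 β = η₀`,
`ker1 β = η₁`, and relational composition `rc`. -/

variable {A : Type*}

/-- 3-permutability forces incomparability. -/
theorem three_permute_incomparable (α β γ δ : Setoid A) (h : IsM3 α β γ δ)
    (h3 : (γ ⊔ β).r = rc γ.r (rc β.r γ.r)) :
    lift0 γ α ⊓ lift1 γ β ≠ ⊥ ∧
    ¬ (lift0 γ α ⊓ lift1 γ β ≤ lift0 γ β ⊓ lift1 γ α) ∧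
    ¬ (lift0 γ β ⊓ lift1 γ α ≤ lift0 γ α ⊓ lift1 γ β) := by
  obtain ⟨hab, hag, hbg, hsab, hsag, hsbg, _, _, _, hane, _, _, _, _, _⟩ := h
  -- get a ≠ b with α a b
  have hex : ∃ a b, α.r a b ∧ a ≠ b := by
    by_contra hc
    push_neg at hc
    apply hane
    apply le_antisymm
    · exact Setoid.le_def.2 fun {x y} hxy => hc x y hxy
    · exact bot_le
  obtain ⟨a, b, hαab, hne⟩ := hex
  -- δ a b, hence (γ ⊔ β) a b
  have hδ : (γ ⊔ β).r a b := by
    have : (α ⊔ β).r a b := Setoid.le_def.1 (le_sup_left : α ≤ α ⊔ β) hαab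
    rw [hsab, ← hsbg, sup_comm] at this
    exact this
  rw [h3] at hδ
  obtain ⟨c, hgac, d, hβcd, hgdb⟩ := hδ
  -- elements of Dup γ
  let x : Dup γ := ⟨(a, c), hgac⟩
  let y : Dup γ := ⟨(b, d), γ.symm' hgdb⟩
  let x' : Dup γ := ⟨(c, a), γ.symm' hgac⟩
  let y' : Dup γ := ⟨(d, b), hgdb⟩
  have hxy : (lift0 γ α ⊓ lift1 γ β).r x y := ⟨hαab, hβcd⟩
  have hxy' : (lift0 γ β ⊓ lift1 γ α).r x' y' := ⟨hβcd, hαab⟩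
  have hbotab : ∀ u v, α.r u v → β.r u v → u = v := by
    intro u v h1 h2
    have : (α ⊓ β).r u v := ⟨h1, h2⟩
    rw [hab] at this
    exact this
  refine ⟨?_, ?_, ?_⟩
  · intro hb
    have : x = y := by rw [hb] at hxy; exact hxy
    exact hne (congrArg (fun z => z.1.1) this)
  · intro hle
    obtain ⟨hβab, _⟩ := Setoid.le_def.1 hle hxy
    exact hne (hbotab a b hαab hβab)
  · intro hle
    obtain ⟨_, hβab⟩ := Setoid.le_def.1 hle hxy'
    exact hne (hbotab a b hαab hβab)
end

section
/- Let A be a type and let α, β, γ, δ be setoids on A forming a diamond M3 with bottom ⊥, and assume the 3-permutability condition γ ⊔ β = γ∘β∘γ. Form the duplication A(γ) over γ. Then Jónsson's splitting inequality for M₃,₃ fails in Setoid (A(γ)) under the substitution x ↦ α₀ ⊓ β₁, y ↦ α₀ ⊓ α₁, z ↦ β₀, w ↦ γ₀; that is, (α₀ ⊓ β₁) ⊓ ((α₀ ⊓ α₁) ⊔ (β₀ ⊓ γ₀)) ⊓ (β₀ ⊔ γ₀) ≰ (α₀ ⊓ α₁) ⊔ ((α₀ ⊓ β₁) ⊓ β₀)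 ⊔ ((α₀ ⊓ β₁) ⊓ γ₀). -/
/-! Common setup: the lattice `Setoid A` of equivalence relations on `A`,
the duplication `Dup β = {p : A × A // β p.1 p.2}`, the lifted setoids
`lift0 β θ = θ₀`, `lift1 β θ = θ₁`, the projection kernels `ker0 β = η₀`,
`ker1 β = η₁`, and relational composition `rc`. -/

variable {A : Type*}

section Aux

private lemma bot_rel_eq {r : Setoid A} (hr : r = ⊥) {a b : A} (hab : r a b) : a = b := by
  subst hr
  rwa [show ((⊥ : Setoid A) a b) = (a = b) from congrFun (congrFun Setoid.bot_def a) b] at hab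

private lemma ne_bot_exists {r : Setoid A} (hr : r ≠ ⊥) : ∃ a b, r a b ∧ a ≠ b := by
  by_contra hc
  push_neg at hc
  apply hr
  apply le_antisymm
  · exact Setoid.le_def.2 fun {x y} hxy => by
      have := hc x y hxy
      rw [show ((⊥ : Setoid A) x y) = (x = y) from congrFun (congrFun Setoid.bot_def x) y]
      exact this
  · exact bot_le

private lemma lift0_sup_rel (γ θ θ' : Setoid A) {u v : Dup γ}
    (hr : (θ ⊔ θ') u.1.1 v.1.1) : (lift0 γ θ ⊔ lift0 γ θ') u v := by
  rw [Setoid.sup_eq_eqvGen] at hr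
  have hr' : Relation.EqvGen (fun x y => θ x y ∨ θ' x y) u.1.1 v.1.1 := hr
  have key : ∀ a b, Relation.EqvGen (fun x y => θ x y ∨ θ' x y) a b →
      ∀ u v : Dup γ, u.1.1 = a → v.1.1 = b → (lift0 γ θ ⊔ lift0 γ θ') u v := by
    intro a b hab
    induction hab with
    | rel x y hxy =>
      intro u v hu hv
      rcases hxy with h1 | h1
      · exact Setoid.le_def.1 le_sup_left (show θ u.1.1 v.1.1 by rw [hu, hv]; exact h1)
      · exact Setoid.le_def.1 le_sup_right (show θ' u.1.1 v.1.1 by rw [hu, hv]; exact h1)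
    | refl x =>
      intro u v hu hv
      exact Setoid.le_def.1 le_sup_left
        (show θ u.1.1 v.1.1 from (hu.trans hv.symm) ▸ θ.refl' _)
    | symm x y _ ih =>
      intro u v hu hv
      exact (lift0 γ θ ⊔ lift0 γ θ').symm' (ih v u hv hu)
    | trans x y z _ _ ih1 ih2 =>
      intro u v hu hv
      exact (lift0 γ θ ⊔ lift0 γ θ').trans' (ih1 u ⟨(y, y), γ.refl' y⟩ hu rfl)
        (ih2 ⟨(y, y), γ.refl' y⟩ v rfl hv)
  exact key _ _ hr' u v rfl rfl

end Aux

/-- failure of Jónsson's splitting inequality for `M₃,₃`. -/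
theorem jonsson_splitting_fails (α β γ δ : Setoid A) (h : IsM3 α β γ δ)
    (h3 : (γ ⊔ β).r = rc γ.r (rc β.r γ.r)) :
    ¬ ((lift0 γ α ⊓ lift1 γ β) ⊓ ((lift0 γ α ⊓ lift1 γ α) ⊔ (lift0 γ β ⊓ lift0 γ γ)) ⊓
        (lift0 γ β ⊔ lift0 γ γ) ≤
      (lift0 γ α ⊓ lift1 γ α) ⊔ ((lift0 γ α ⊓ lift1 γ β) ⊓ lift0 γ β) ⊔
        ((lift0 γ α ⊓ lift1 γ β) ⊓ lift0 γ γ)) := by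
  obtain ⟨hab, hac, hbc, hABd, hACd, hBCd, -, -, -, hA0, -, -, -, -, -⟩ := h
  intro H
  obtain ⟨c, d, hcd, hne⟩ := ne_bot_exists hA0
  -- split c, d via 3-permutability
  have hδ : α ≤ γ ⊔ β := by
    rw [sup_comm, hBCd, ← hABd]; exact le_sup_left
  have hgb : (γ ⊔ β).r c d := Setoid.le_def.1 hδ hcd
  rw [h3] at hgb
  obtain ⟨p, hcp, q, hpq, hqd⟩ := hgb
  set u : Dup γ := ⟨(c, p), hcp⟩ with hu
  set v : Dup γ := ⟨(d, q), γ.symm' hqd⟩ with hv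
  -- u, v lie in the left-hand side
  have h1 : (lift0 γ α ⊓ lift1 γ β) u v := Setoid.inf_iff_and.2 ⟨hcd, hpq⟩
  have hmid : ((lift0 γ α ⊓ lift1 γ α) ⊔ (lift0 γ β ⊓ lift0 γ γ)) u v := by
    have s1 : ((lift0 γ α ⊓ lift1 γ α) ⊔ (lift0 γ β ⊓ lift0 γ γ)) u ⟨(c, c), γ.refl' c⟩ :=
      Setoid.le_def.1 le_sup_right (Setoid.inf_iff_and.2 ⟨β.refl' c, γ.refl' c⟩)
    have s2 : ((lift0 γ α ⊓ lift1 γ α) ⊔ (lift0 γ β ⊓ lift0 γ γ))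
        ⟨(c, c), γ.refl' c⟩ ⟨(d, d), γ.refl' d⟩ :=
      Setoid.le_def.1 le_sup_left (Setoid.inf_iff_and.2 ⟨hcd, hcd⟩)
    have s3 : ((lift0 γ α ⊓ lift1 γ α) ⊔ (lift0 γ β ⊓ lift0 γ γ)) ⟨(d, d), γ.refl' d⟩ v :=
      Setoid.le_def.1 le_sup_right (Setoid.inf_iff_and.2 ⟨β.refl' d, γ.refl' d⟩)
    exact Setoid.trans' _ (Setoid.trans' _ s1 s2) s3
  have hlast : (lift0 γ β ⊔ lift0 γ γ) u v := by
    apply lift0_sup_rel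
    have hαle : α ≤ β ⊔ γ := by rw [hBCd, ← hABd]; exact le_sup_left
    exact Setoid.le_def.1 hαle hcd
  have hLHS := Setoid.inf_iff_and.2 ⟨Setoid.inf_iff_and.2 ⟨h1, hmid⟩, hlast⟩
  have hR := Setoid.le_def.1 H hLHS
  -- the right-hand side collapses to α₀ ⊓ α₁
  have hcollapse : (lift0 γ α ⊓ lift1 γ α) ⊔ ((lift0 γ α ⊓ lift1 γ β) ⊓ lift0 γ β) ⊔
      ((lift0 γ α ⊓ lift1 γ β) ⊓ lift0 γ γ) ≤ lift0 γ α ⊓ lift1 γ α := by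
    refine sup_le (sup_le le_rfl ?_) ?_
    · refine Setoid.le_def.2 fun {x y} hxy => ?_
      obtain ⟨hxy1, hb0⟩ := Setoid.inf_iff_and.1 hxy
      obtain ⟨ha0, hb1⟩ := Setoid.inf_iff_and.1 hxy1
      have h11 : x.1.1 = y.1.1 := bot_rel_eq hab (Setoid.inf_iff_and.2 ⟨ha0, hb0⟩)
      have hg2 : γ x.1.2 y.1.2 := by
        refine γ.trans' (γ.symm' x.2) ?_
        rw [h11]; exact y.2
      have h22 : x.1.2 = y.1.2 := bot_rel_eq hbc (Setoid.inf_iff_and.2 ⟨hb1, hg2⟩)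
      exact Setoid.inf_iff_and.2 ⟨ha0, show α x.1.2 y.1.2 from h22 ▸ α.refl' _⟩
    · refine Setoid.le_def.2 fun {x y} hxy => ?_
      obtain ⟨hxy1, hg0⟩ := Setoid.inf_iff_and.1 hxy
      obtain ⟨ha0, hb1⟩ := Setoid.inf_iff_and.1 hxy1
      have h11 : x.1.1 = y.1.1 := bot_rel_eq hac (Setoid.inf_iff_and.2 ⟨ha0, hg0⟩)
      have hg2 : γ x.1.2 y.1.2 := by
        refine γ.trans' (γ.symm' x.2) ?_
        rw [h11]; exact y.2
      have h22 : x.1.2 = y.1.2 := bot_rel_eq hbc (Setoid.inf_iff_and.2 ⟨hb1, hg2⟩)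
      exact Setoid.inf_iff_and.2 ⟨ha0, show α x.1.2 y.1.2 from h22 ▸ α.refl' _⟩
  obtain ⟨-, hαpq⟩ := Setoid.inf_iff_and.1 (Setoid.le_def.1 hcollapse hR)
  have hpq' : p = q := bot_rel_eq hab (Setoid.inf_iff_and.2 ⟨hαpq, hpq⟩)
  have hgcd : γ c d := γ.trans' hcp (hpq' ▸ hqd)
  exact hne (bot_rel_eq hac (Setoid.inf_iff_and.2 ⟨hcd, hgcd⟩))
end

section
/- Let A be a type and let α, β, γ, δ be setoids on A forming a pairwise permuting diamond M3 with bottom ⊥. Form the duplication A(γ) over γ. Then in Setoid (A(γ)): η₀ ∘ (α₀ ⊓ β₁) = η₀ ⊔ (α₀ ⊓ β₁) = α₀, and η₀ ∘ (α₀ ⊓ α₁) = η₀ ⊔ (α₀ ⊓ α₁) = α₀. -/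
/-! Common setup: the lattice `Setoid A` of equivalence relations on `A`,
the duplication `Dup β = {p : A × A // β p.1 p.2}`, the lifted setoids
`lift0 β θ = θ₀`, `lift1 β θ = θ₁`, the projection kernels `ker0 β = η₀`,
`ker1 β = η₁`, and relational composition `rc`. -/

variable {A : Type*}

/-- The diamond is pairwise permuting. -/
def M3Permutes (α β γ : Setoid A) : Prop :=
  rc α.r β.r = rc β.r α.r ∧ rc α.r γ.r = rc γ.r α.r ∧
  rc β.r γ.r = rc γ.r β.r

/-- Permuting equivalences: composition is the join. -/
theorem sup_rel_of_permute (r s : Setoid A) (h : rc r.r s.r = rc s.r r.r) :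
    (r ⊔ s).r = rc r.r s.r := by
  have hsymm : ∀ a b, rc r.r s.r a b → rc r.r s.r b a := by
    intro a b ⟨c, hrc, hsc⟩
    rw [h]; exact ⟨c, s.symm' hsc, r.symm' hrc⟩
  have htrans : ∀ a b c, rc r.r s.r a b → rc r.r s.r b c →
      rc r.r s.r a c := by
    intro a b c ⟨x, hax, hxb⟩ ⟨y, hby, hyc⟩
    have : rc s.r r.r x y := ⟨b, hxb, hby⟩
    rw [← h] at this
    obtain ⟨v, hxv, hvy⟩ := this
    exact ⟨v, r.trans' hax hxv, s.trans' hvy hyc⟩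
  set e : Setoid A := ⟨rc r.r s.r,
    ⟨fun a => ⟨a, r.refl' a, s.refl' a⟩, fun {a b} hab => hsymm a b hab,
     fun {a b c} h1 h2 => htrans a b c h1 h2⟩⟩ with he
  have : r ⊔ s = e := by
    apply le_antisymm
    · apply sup_le
      · intro x y hxy; exact ⟨y, hxy, s.refl' y⟩
      · intro x y hxy; exact ⟨x, r.refl' x, hxy⟩
    · intro x y hxy
      obtain ⟨c, hrc, hsc⟩ := hxy
      exact Setoid.trans' _ (le_sup_left (a := r) (b := s) hrc)
        (le_sup_right (a := r) (b := s) hsc)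
  rw [this]
  rfl

/-- Lemma 4.2(1),(2). -/
theorem permute_lemma_12 (α β γ δ : Setoid A) (h : IsM3 α β γ δ)
    (hperm : M3Permutes α β γ) :
    rc (ker0 γ).r (lift0 γ α ⊓ lift1 γ β).r =
      (ker0 γ ⊔ (lift0 γ α ⊓ lift1 γ β)).r ∧
    ker0 γ ⊔ (lift0 γ α ⊓ lift1 γ β) = lift0 γ α ∧
    rc (ker0 γ).r (lift0 γ α ⊓ lift1 γ α).r =
      (ker0 γ ⊔ (lift0 γ α ⊓ lift1 γ α)).r ∧
    ker0 γ ⊔ (lift0 γ α ⊓ lift1 γ α) = lift0 γ α := by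
  obtain ⟨-, -, -, hab, hag, hbg, -⟩ := h
  obtain ⟨pab, pag, pbg⟩ := hperm
  have key : ∀ x y : Dup γ, α.r x.1.1 y.1.1 →
      rc (ker0 γ).r (lift0 γ α ⊓ lift1 γ β).r x y := by
    rintro ⟨⟨a, b⟩, hγab⟩ ⟨⟨c, d⟩, hγcd⟩ hac
    have h1 : (α ⊔ γ).r a d := by
      rw [sup_rel_of_permute α γ pag]; exact ⟨c, hac, hγcd⟩
    have h2 : (β ⊔ γ).r a d := by rw [hbg, ← hag]; exact h1
    rw [sup_rel_of_permute β γ pbg, pbg] at h2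
    obtain ⟨f, hγaf, hβfd⟩ := h2
    exact ⟨⟨⟨a, f⟩, hγaf⟩, rfl, hac, hβfd⟩
  have key2 : ∀ x y : Dup γ, α.r x.1.1 y.1.1 →
      rc (ker0 γ).r (lift0 γ α ⊓ lift1 γ α).r x y := by
    rintro ⟨⟨a, b⟩, hγab⟩ ⟨⟨c, d⟩, hγcd⟩ hac
    have : rc γ.r α.r a d := by rw [← pag]; exact ⟨c, hac, hγcd⟩
    obtain ⟨f, hγaf, hαfd⟩ := this
    exact ⟨⟨⟨a, f⟩, hγaf⟩, rfl, hac, hαfd⟩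
  have sup_eq : ∀ θ : Setoid A,
      (∀ x y : Dup γ, α.r x.1.1 y.1.1 →
        rc (ker0 γ).r (lift0 γ α ⊓ lift1 γ θ).r x y) →
      ker0 γ ⊔ (lift0 γ α ⊓ lift1 γ θ) = lift0 γ α := by
    intro θ hkey
    apply le_antisymm
    · apply sup_le
      · intro x y hxy
        show α.r x.1.1 y.1.1
        rw [show x.1.1 = y.1.1 from hxy]
      · exact inf_le_left
    · intro x y hxy
      obtain ⟨z, hxz, hz⟩ := hkey x y hxy
      exact Setoid.trans'
        (ker0 γ ⊔ (lift0 γ α ⊓ lift1 γ θ))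
        (le_sup_left (a := ker0 γ) (b := lift0 γ α ⊓ lift1 γ θ) hxz)
        (le_sup_right (a := ker0 γ) (b := lift0 γ α ⊓ lift1 γ θ) hz)
  have rc_eq : ∀ θ : Setoid A,
      (∀ x y : Dup γ, α.r x.1.1 y.1.1 →
        rc (ker0 γ).r (lift0 γ α ⊓ lift1 γ θ).r x y) →
      rc (ker0 γ).r (lift0 γ α ⊓ lift1 γ θ).r =
        (ker0 γ ⊔ (lift0 γ α ⊓ lift1 γ θ)).r := by
    intro θ hkey
    rw [sup_eq θ hkey]
    funext x y
    apply propext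
    constructor
    · rintro ⟨z, hxz, hz1, -⟩
      show α.r x.1.1 y.1.1
      rw [show x.1.1 = z.1.1 from hxz]
      exact hz1
    · exact hkey x y
  exact ⟨rc_eq β key, sup_eq β key, rc_eq α key2, sup_eq α key2⟩
end

section
/- Let A be a type and let α, β, γ, δ be setoids on A forming a pairwise permuting diamond M3 with bottom ⊥. Form the duplication A(γ) over γ. Then in Setoid (A(γ)): (α₀ ⊓ β₁) ∘ (α₀ ⊓ α₁) = (α₀ ⊓ β₁) ⊔ (α₀ ⊓ α₁) = α₀. -/
/-! Common setup: the lattice `Setoid A` of equivalence relations on `A`,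
the duplication `Dup β = {p : A × A // β p.1 p.2}`, the lifted setoids
`lift0 β θ = θ₀`, `lift1 β θ = θ₁`, the projection kernels `ker0 β = η₀`,
`ker1 β = η₁`, and relational composition `rc`. -/

variable {A : Type*}

lemma sup_le_rc {A : Type*} (r s : Setoid A) (hp : rc r.r s.r = rc s.r r.r) :
    ∀ x y, (r ⊔ s).r x y → rc r.r s.r x y := by
  intro x y hxy
  rw [Setoid.sup_eq_eqvGen] at hxy
  induction hxy with
  | rel x y hr => exact hr.elim (fun h => ⟨y, h, s.refl' _⟩) (fun h => ⟨x, r.refl' _, h⟩)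
  | refl x => exact ⟨x, r.refl' _, s.refl' _⟩
  | symm x y _ ih =>
    obtain ⟨c, hrc, hsc⟩ := ih
    rw [hp]
    exact ⟨c, s.symm' hsc, r.symm' hrc⟩
  | trans x y z _ _ ih₁ ih₂ =>
    obtain ⟨c, hrc, hsc⟩ := ih₁
    obtain ⟨d, hrd, hsd⟩ := ih₂
    have : rc r.r s.r c d := by rw [hp]; exact ⟨y, hsc, hrd⟩
    obtain ⟨e, hre, hse⟩ := this
    exact ⟨e, r.trans' hrc hre, s.trans' hse hsd⟩

/-- Lemma 4.2(3). -/
theorem permute_lemma_3 (α β γ δ : Setoid A) (h : IsM3 α β γ δ)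
    (hperm : M3Permutes α β γ) :
    rc (lift0 γ α ⊓ lift1 γ β).r (lift0 γ α ⊓ lift1 γ α).r =
      ((lift0 γ α ⊓ lift1 γ β) ⊔ (lift0 γ α ⊓ lift1 γ α)).r ∧
    (lift0 γ α ⊓ lift1 γ β) ⊔ (lift0 γ α ⊓ lift1 γ α) = lift0 γ α := by
  obtain ⟨-, -, -, hab, hac, -, -⟩ := h
  obtain ⟨pab, pac, -⟩ := hperm
  set θ := lift0 γ α ⊓ lift1 γ β with hθ
  set φ := lift0 γ α ⊓ lift1 γ α with hφ
  -- key: α₀ ⊆ θ ∘ φ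
  have key : ∀ x y : Dup γ, α.r x.1.1 y.1.1 → rc θ.r φ.r x y := by
    rintro ⟨⟨a, b⟩, hg⟩ ⟨⟨a', b'⟩, hg'⟩ haa'
    have hδ : δ.r b b' := by
      rw [← hac]
      have h1 : (α ⊔ γ).r b a := Setoid.le_def.mp le_sup_right (γ.symm' hg)
      have h2 : (α ⊔ γ).r a a' := Setoid.le_def.mp le_sup_left haa'
      have h3 : (α ⊔ γ).r a' b' := Setoid.le_def.mp le_sup_right hg'
      exact (α ⊔ γ).trans' (((α ⊔ γ)).trans' h1 h2) h3
    have hba : (β ⊔ α).r b b' := by rw [sup_comm, hab]; exact hδ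
    obtain ⟨c₂, hbc₂, hc₂b'⟩ := sup_le_rc β α pab.symm b b' hba
    have hga : rc γ.r α.r a' c₂ := ⟨b', hg', α.symm' hc₂b'⟩
    rw [← pac] at hga
    obtain ⟨c₁, ha'c₁, hc₁c₂⟩ := hga
    refine ⟨⟨(c₁, c₂), hc₁c₂⟩, ⟨α.trans' haa' ha'c₁, hbc₂⟩, ⟨α.symm' ha'c₁, hc₂b'⟩⟩
  have hle : θ ⊔ φ ≤ lift0 γ α := sup_le inf_le_left inf_le_left
  have rc_le : ∀ x y : Dup γ, rc θ.r φ.r x y → (θ ⊔ φ).r x y := by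
    rintro x y ⟨c, h1, h2⟩
    exact (θ ⊔ φ).trans' (Setoid.le_def.mp le_sup_left h1) (Setoid.le_def.mp le_sup_right h2)
  have hjoin : θ ⊔ φ = lift0 γ α := by
    refine le_antisymm hle (Setoid.le_def.mpr ?_)
    intro x y hxy
    exact rc_le x y (key x y hxy)
  refine ⟨?_, hjoin⟩
  funext x y
  apply propext
  constructor
  · exact rc_le x y
  · intro hxy
    exact key x y (Setoid.le_def.mp hjoin.le hxy)
end
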